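/- arXiv:2507.08370 — 6 statements merged into one kernel-verified Lean document; each statement's English description precedes it below -/
import Mathlib

section
/- For every f in the Schwartz space on R, ‖f‖_{L^2}^2 ≤ 2 ‖f'‖_{L^2} · ‖x·f‖_{L^2}. -/
open MeasureTheory
open scoped RealInnerProductSpace

/-- Product of norms of two Schwartz functions is integrable. -/
private lemma schwartz_norm_mul_integrable (g h : SchwartzMap ℝ ℂ) :
    Integrable (fun x : ℝ => ‖g x‖ * ‖h x‖) := by
  obtain ⟨C, hC⟩ := g.decay 0 0
  refine (h.integrable (μ := volume)).norm.bdd_mul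
    (g.continuous.norm.aestronglyMeasurable) (c := C) (Filter.Eventually.of_forall fun x => ?_)
  have := hC.2 x
  simpa using this

/-- One-dimensional Heisenberg uncertainty principle for Schwartz functions:
`‖f‖_{L²}² ≤ 2 ‖f'‖_{L²} ‖x f‖_{L²}`. -/
theorem heisenberg_1d_schwartz (f : SchwartzMap ℝ ℂ) :
    (∫ x : ℝ, ‖f x‖ ^ 2) ≤
      2 * Real.sqrt (∫ x : ℝ, ‖deriv f x‖ ^ 2) * Real.sqrt (∫ x : ℝ, ‖x • f x‖ ^ 2) := by
  -- the derivative as a Schwartz function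
  set f' : SchwartzMap ℝ ℂ := SchwartzMap.derivCLM ℝ ℂ f with hf'def
  have hf'x : ∀ x, f' x = deriv f x := fun x => SchwartzMap.derivCLM_apply ℝ f x
  -- `x • f x` as a Schwartz function
  set xf : SchwartzMap ℝ ℂ :=
    SchwartzMap.bilinLeftCLM ((ContinuousLinearMap.lsmul ℝ ℝ : ℝ →L[ℝ] ℂ →L[ℝ] ℂ).flip)
      (ContinuousLinearMap.id ℝ ℝ).hasTemperateGrowth f with hxfdef
  have hxfx : ∀ x : ℝ, xf x = x • f x := fun x => rfl
  -- pointwise derivative computation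
  have hderiv : ∀ x : ℝ, HasDerivAt (fun t : ℝ => t * ⟪f t, f t⟫)
      (⟪f x, f x⟫ + x * (⟪f x, f' x⟫ + ⟪f' x, f x⟫)) x := by
    intro x
    have hfd : HasDerivAt (fun t : ℝ => f t) (f' x) x := by
      rw [hf'x]
      exact f.differentiableAt.hasDerivAt
    have hinner : HasDerivAt (fun t : ℝ => ⟪f t, f t⟫)
        (⟪f x, f' x⟫ + ⟪f' x, f x⟫) x := hfd.inner ℝ hfd
    have := (hasDerivAt_id' x).fun_mul hinner
    simpa using this
  -- the integrand bound for the derivative part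
  have hbound : ∀ x : ℝ, |x * (⟪f x, f' x⟫ + ⟪f' x, f x⟫)| ≤ 2 * (‖f' x‖ * ‖xf x‖) := by
    intro x
    have h1 : x * (⟪f x, f' x⟫ + ⟪f' x, f x⟫) = 2 * ⟪f' x, xf x⟫ := by
      rw [hxfx, real_inner_smul_right, real_inner_comm (f x) (f' x)]
      ring
    rw [h1, abs_mul, abs_two]
    gcongr
    exact abs_real_inner_le_norm _ _
  -- integrability facts
  have hint2 : Integrable (fun x : ℝ => x * (⟪f x, f' x⟫ + ⟪f' x, f x⟫)) := by
    refine (Integrable.const_mul (schwartz_norm_mul_integrable f' xf) 2).mono'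
      ?_ (Filter.Eventually.of_forall fun x => ?_)
    · exact (continuous_id.mul ((f.continuous.inner f'.continuous).add
        (f'.continuous.inner f.continuous))).aestronglyMeasurable
    · rw [Real.norm_eq_abs]; exact hbound x
  have hint1 : Integrable (fun x : ℝ => ⟪f x, f x⟫) := by
    have := schwartz_norm_mul_integrable f f
    refine this.congr (Filter.Eventually.of_forall fun x => ?_)
    exact (real_inner_self_eq_norm_mul_norm (f x)).symm
  have hintg : Integrable (fun x : ℝ => x * ⟪f x, f x⟫) := by
    refine (schwartz_norm_mul_integrable xf f).mono'
      ?_ (Filter.Eventually.of_forall fun x => ?_)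
    · exact (continuous_id.mul (f.continuous.inner f.continuous)).aestronglyMeasurable
    · rw [Real.norm_eq_abs, abs_mul, hxfx, norm_smul, real_inner_self_eq_norm_mul_norm,
        abs_of_nonneg (mul_nonneg (norm_nonneg _) (norm_nonneg _)), Real.norm_eq_abs]
      ring_nf
      exact le_refl _
  -- FTC on the whole line
  have hFTC : (∫ x : ℝ, (⟪f x, f x⟫ + x * (⟪f x, f' x⟫ + ⟪f' x, f x⟫))) = 0 :=
    integral_eq_zero_of_hasDerivAt_of_integrable hderiv (hint1.add hint2) hintg
  have hkey : (∫ x : ℝ, ‖f x‖ ^ 2) = - ∫ x : ℝ, x * (⟪f x, f' x⟫ + ⟪f' x, f x⟫) := by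
    have h := integral_add hint1 hint2
    rw [hFTC] at h
    have h2 : (∫ x : ℝ, ⟪f x, f x⟫) = ∫ x : ℝ, ‖f x‖ ^ 2 := by
      congr 1 with x
      rw [real_inner_self_eq_norm_sq]
    linarith [h, h2]
  -- Memℒp facts for Hölder
  have hmem : ∀ g : SchwartzMap ℝ ℂ, MemLp (fun x : ℝ => g x) (ENNReal.ofReal 2) volume := by
    intro g
    have h2 : (ENNReal.ofReal 2 : ENNReal) = 2 := by norm_num
    rw [h2]
    refine (memLp_two_iff_integrable_sq_norm g.continuous.aestronglyMeasurable).2 ?_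
    refine (schwartz_norm_mul_integrable g g).congr (Filter.Eventually.of_forall fun x => ?_)
    exact (pow_two _).symm
  -- Hölder / Cauchy–Schwarz
  have hconj : Real.HolderConjugate 2 2 := Real.HolderConjugate.two_two
  have hcs := integral_mul_norm_le_Lp_mul_Lq (μ := volume) hconj (hmem f') (hmem xf)
  have hcs' : (∫ x : ℝ, ‖f' x‖ * ‖xf x‖) ≤
      Real.sqrt (∫ x : ℝ, ‖deriv f x‖ ^ 2) * Real.sqrt (∫ x : ℝ, ‖x • f x‖ ^ 2) := by
    have e1 : (∫ x : ℝ, ‖f' x‖ ^ (2 : ℝ)) = ∫ x : ℝ, ‖deriv f x‖ ^ 2 := by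
      congr 1 with x
      rw [hf'x, ← Real.rpow_natCast (‖deriv f x‖) 2]
      norm_num
    have e2 : (∫ x : ℝ, ‖xf x‖ ^ (2 : ℝ)) = ∫ x : ℝ, ‖x • f x‖ ^ 2 := by
      congr 1 with x
      rw [hxfx, ← Real.rpow_natCast (‖x • f x‖) 2]
      norm_num
    calc (∫ x : ℝ, ‖f' x‖ * ‖xf x‖)
        ≤ (∫ x : ℝ, ‖f' x‖ ^ (2 : ℝ)) ^ ((1 : ℝ)/2) * (∫ x : ℝ, ‖xf x‖ ^ (2 : ℝ)) ^ ((1 : ℝ)/2) :=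
          hcs
      _ = Real.sqrt (∫ x : ℝ, ‖deriv f x‖ ^ 2) * Real.sqrt (∫ x : ℝ, ‖x • f x‖ ^ 2) := by
          rw [e1, e2, Real.sqrt_eq_rpow, Real.sqrt_eq_rpow]
  -- conclude
  calc (∫ x : ℝ, ‖f x‖ ^ 2)
      = - ∫ x : ℝ, x * (⟪f x, f' x⟫ + ⟪f' x, f x⟫) := hkey
    _ ≤ ∫ x : ℝ, |x * (⟪f x, f' x⟫ + ⟪f' x, f x⟫)| := by
        rw [← integral_neg]
        exact integral_mono hint2.neg hint2.abs fun x => neg_le_abs _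
    _ ≤ ∫ x : ℝ, 2 * (‖f' x‖ * ‖xf x‖) := by
        exact integral_mono hint2.abs ((schwartz_norm_mul_integrable f' xf).const_mul 2)
          fun x => hbound x
    _ = 2 * ∫ x : ℝ, ‖f' x‖ * ‖xf x‖ := MeasureTheory.integral_const_mul 2 _
    _ ≤ 2 * (Real.sqrt (∫ x : ℝ, ‖deriv f x‖ ^ 2) * Real.sqrt (∫ x : ℝ, ‖x • f x‖ ^ 2)) := by
        linarith [hcs']
    _ = 2 * Real.sqrt (∫ x : ℝ, ‖deriv f x‖ ^ 2) * Real.sqrt (∫ x : ℝ, ‖x • f x‖ ^ 2) := by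
        ring
end

section
/- A Schwartz function f on R satisfies ‖f‖_{L^2}^2 = 2 ‖f'‖_{L^2} ‖x·f‖_{L^2} with f not identically zero only if f(x) = c·e^{-λ x^2/2} for some constant c and some λ > 0; in particular the extremizers of the 1D Heisenberg inequality are Gaussians. -/
open MeasureTheory Filter

private lemma schwartz_int_mul (φ ψ : SchwartzMap ℝ ℂ) (k : ℕ) :
    Integrable (fun x : ℝ => |x| ^ k * (‖φ x‖ * ‖ψ x‖)) := by
  obtain ⟨M, hM0, hM⟩ := ψ.decay 0 0
  have hb : ∀ x : ℝ, ‖ψ x‖ ≤ M := by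
    intro x; simpa [norm_iteratedFDeriv_zero] using hM x
  refine ((φ.integrable_pow_mul volume k).const_mul M).mono' ?_ ?_
  · exact ((continuous_abs.pow k).mul
      ((φ.continuous.norm).mul (ψ.continuous.norm))).aestronglyMeasurable
  · filter_upwards with x
    have h1 : (0:ℝ) ≤ |x| ^ k * (‖φ x‖ * ‖ψ x‖) := by positivity
    rw [Real.norm_eq_abs, abs_of_nonneg h1]
    have h2 : ‖x‖ = |x| := Real.norm_eq_abs x
    rw [h2]
    nlinarith [norm_nonneg (φ x), norm_nonneg (ψ x), pow_nonneg (abs_nonneg x) k,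
      mul_nonneg (pow_nonneg (abs_nonneg x) k) (norm_nonneg (φ x)), hb x]

private lemma zero_of_nonneg (q : ℝ → ℝ) (hq : Continuous q) (h0 : ∀ x, 0 ≤ q x)
    (hint : Integrable q) (hz : ∫ x, q x = 0) : ∀ x, q x = 0 := by
  have h := (integral_eq_zero_iff_of_nonneg h0 hint).mp hz
  have heq : q = 0 := (hq.ae_eq_iff_eq volume continuous_const).mp h
  intro x; rw [heq]; rfl

private lemma pointwise_ode (z w : ℂ) (x t : ℝ)
    (hv : ‖w‖ = t * (|x| * ‖z‖))
    (he : (|x| * ‖z‖) * ‖w‖ = -(x * ((starRingEnd ℂ) z * w).re)) :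
    w = -((t : ℂ) * x) * z := by
  rcases eq_or_ne x 0 with rfl | hx
  · have : ‖w‖ = 0 := by simpa using hv
    simp [norm_eq_zero.mp this]
  rcases eq_or_ne z 0 with rfl | hz
  · have : ‖w‖ = 0 := by simpa using hv
    simp [norm_eq_zero.mp this]
  set r := (starRingEnd ℂ) z * w with hr
  have hrnorm : ‖r‖ = ‖z‖ * ‖w‖ := by rw [hr, norm_mul, RCLike.norm_conj]
  have hre : x * r.re = -(t * (x ^ 2 * ‖z‖ ^ 2)) := by
    have h2 : t * (x ^ 2 * ‖z‖ ^ 2) = |x| * ‖z‖ * (t * (|x| * ‖z‖)) := by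
      rw [← sq_abs x]; ring
    rw [hv] at he; linarith
  have hre' : r.re = -(t * (x * ‖z‖ ^ 2)) := by
    refine mul_left_cancel₀ hx ?_
    rw [hre]; ring
  have hrn2 : ‖r‖ = t * (|x| * ‖z‖ ^ 2) := by rw [hrnorm, hv]; ring
  have him : r.im = 0 := by
    have h1 : r.re ^ 2 + r.im ^ 2 = ‖r‖ ^ 2 := by
      rw [Complex.sq_norm, Complex.normSq_apply]; ring
    have h2 : r.re ^ 2 = ‖r‖ ^ 2 := by
      rw [hre', hrn2,
        show (-(t * (x * ‖z‖ ^ 2))) ^ 2 = t ^ 2 * x ^ 2 * (‖z‖ ^ 2) ^ 2 from by ring,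
        show (t * (|x| * ‖z‖ ^ 2)) ^ 2 = t ^ 2 * |x| ^ 2 * (‖z‖ ^ 2) ^ 2 from by ring,
        sq_abs]
    nlinarith [sq_nonneg r.im]
  have hreq : r = ((-(t * (x * ‖z‖ ^ 2)) : ℝ) : ℂ) := by
    apply Complex.ext
    · simp only [Complex.ofReal_re]; exact hre'
    · simp only [Complex.ofReal_im]; exact him
  have hz2 : ((‖z‖ : ℂ)) ^ 2 = (starRingEnd ℂ) z * z := by
    rw [← Complex.normSq_eq_conj_mul_self, Complex.normSq_eq_norm_sq, Complex.ofReal_pow]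
  have : (starRingEnd ℂ) z * w = (starRingEnd ℂ) z * (-((t : ℂ) * x) * z) := by
    rw [← hr, hreq]
    push_cast
    rw [hz2]
    ring
  exact mul_left_cancel₀ (by simpa using hz) this

set_option maxHeartbeats 1000000 in
/-- Equality case of the one-dimensional Heisenberg uncertainty principle: the only
nonzero extremizers of `‖f‖_{L²}² ≤ 2‖f'‖_{L²}‖xf‖_{L²}` are Gaussians. -/
theorem heisenberg_1d_extremizers (f : SchwartzMap ℝ ℂ)
    (heq : (∫ x : ℝ, ‖f x‖ ^ 2) =
      2 * Real.sqrt (∫ x : ℝ, ‖deriv f x‖ ^ 2) * Real.sqrt (∫ x : ℝ, ‖x • f x‖ ^ 2))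
    (hne : ∃ x : ℝ, f x ≠ 0) :
    ∃ (c : ℂ) (lam : ℝ), 0 < lam ∧ ∀ x : ℝ, f x = c * Complex.exp (-(lam : ℂ) * x ^ 2 / 2) := by
  classical
  -- the derivative as a Schwartz map
  set f' : SchwartzMap ℝ ℂ := SchwartzMap.derivCLM ℝ ℂ f with hf'def
  have hf' : ∀ x, f' x = deriv f x := fun x => SchwartzMap.derivCLM_apply ℝ f x
  have hcontd : Continuous (deriv (⇑f)) := by
    have : ⇑f' = deriv (⇑f) := funext hf'
    rw [← this]; exact f'.continuous
  set A : ℝ := ∫ x : ℝ, ‖f x‖ ^ 2 with hA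
  set B : ℝ := ∫ x : ℝ, ‖deriv f x‖ ^ 2 with hB
  set C : ℝ := ∫ x : ℝ, ‖x • f x‖ ^ 2 with hC
  set u : ℝ → ℝ := fun x => ‖x • f x‖ with hu
  set v : ℝ → ℝ := fun x => ‖deriv f x‖ with hv
  have huabs : ∀ x, u x = |x| * ‖f x‖ := by
    intro x; rw [hu]; simp [norm_smul, Real.norm_eq_abs]
  -- integrability facts
  have int_ff : Integrable (fun x : ℝ => ‖f x‖ ^ 2) := by
    have h := schwartz_int_mul f f 0
    simpa [pow_two] using h
  have int_v2 : Integrable (fun x : ℝ => ‖deriv f x‖ ^ 2) := by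
    have h := schwartz_int_mul f' f' 0
    simp only [hf'] at h
    simpa [pow_two] using h
  have int_u2 : Integrable (fun x : ℝ => ‖x • f x‖ ^ 2) := by
    have h := schwartz_int_mul f f 2
    refine h.congr (Eventually.of_forall fun x => ?_)
    simp only
    rw [norm_smul, Real.norm_eq_abs]; ring
  have int_uv : Integrable (fun x : ℝ => u x * v x) := by
    have h := schwartz_int_mul f f' 1
    simp only [hf'] at h
    refine h.congr (Eventually.of_forall fun x => ?_)
    simp only [hu, hv, norm_smul, Real.norm_eq_abs]
    ring
  -- the function p x = Re(conj (f x) * f' x)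
  set p : ℝ → ℝ := fun x => ((starRingEnd ℂ) (f x) * deriv f x).re with hp
  have hcontp : Continuous p := by
    refine Complex.continuous_re.comp ?_
    exact ((Complex.continuous_conj.comp f.continuous).mul hcontd)
  have hpbound : ∀ x : ℝ, |x * (2 * p x)| ≤ 2 * (u x * v x) := by
    intro x
    have h1 : |p x| ≤ ‖f x‖ * ‖deriv f x‖ := by
      rw [hp]
      calc |((starRingEnd ℂ) (f x) * deriv f x).re|
          ≤ ‖(starRingEnd ℂ) (f x) * deriv f x‖ := by
            exact Complex.abs_re_le_norm _
        _ = ‖f x‖ * ‖deriv f x‖ := by rw [norm_mul, RCLike.norm_conj]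
    rw [abs_mul, abs_mul, huabs x, hv]
    have := abs_nonneg x
    have := norm_nonneg (f x)
    have := norm_nonneg (deriv f x)
    have h2 : |(2:ℝ)| = 2 := by norm_num
    rw [h2]
    nlinarith [abs_nonneg (p x)]
  have int_xp : Integrable (fun x : ℝ => x * (2 * p x)) := by
    refine (int_uv.const_mul 2).mono' ?_ ?_
    · exact (continuous_id.mul (continuous_const.mul hcontp)).aestronglyMeasurable
    · filter_upwards with x
      rw [Real.norm_eq_abs]
      exact hpbound x
  -- integration by parts: A = ∫ -(x * (2 * p x))
  have hA2 : A = ∫ x : ℝ, -(x * (2 * p x)) := by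
    set g : ℝ → ℝ := fun x => x * ((f x).re ^ 2 + (f x).im ^ 2) with hg
    set g' : ℝ → ℝ := fun x => ‖f x‖ ^ 2 + x * (2 * p x) with hg'
    have hnsq : ∀ z : ℂ, ‖z‖ ^ 2 = z.re ^ 2 + z.im ^ 2 := by
      intro z
      rw [Complex.sq_norm, Complex.normSq_apply]; ring
    have hderiv : ∀ x, HasDerivAt g (g' x) x := by
      intro x
      have hfd : HasDerivAt (⇑f) (deriv f x) x := f.differentiableAt.hasDerivAt
      have hre : HasDerivAt (fun y => (f y).re) ((deriv f x).re) x :=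
        (Complex.reCLM.hasFDerivAt.comp_hasDerivAt x hfd :)
      have him : HasDerivAt (fun y => (f y).im) ((deriv f x).im) x :=
        (Complex.imCLM.hasFDerivAt.comp_hasDerivAt x hfd :)
      have hq : HasDerivAt (fun y => (f y).re ^ 2 + (f y).im ^ 2)
          ((2 : ℕ) * (f x).re ^ 1 * (deriv f x).re + (2 : ℕ) * (f x).im ^ 1 * (deriv f x).im) x :=
        (hre.pow 2).add (him.pow 2)
      have hid : HasDerivAt (fun y : ℝ => y) 1 x := hasDerivAt_id x
      have h := hid.mul hq
      refine h.congr_deriv ?_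
      simp only [hg', hnsq, hp, Complex.mul_re, Complex.conj_re, Complex.conj_im]
      push_cast
      ring
    have hcoc : Tendsto (fun x : ℝ => ‖f x‖) (cocompact ℝ) (nhds 0) := by
      have h := zero_at_infty (f.toZeroAtInfty)
      simpa using h.norm
    have htop0 : Tendsto (fun x : ℝ => ‖f x‖) atTop (nhds 0) := by
      refine hcoc.mono_left ?_
      rw [cocompact_eq_atBot_atTop]; exact le_sup_right
    have hbot0 : Tendsto (fun x : ℝ => ‖f x‖) atBot (nhds 0) := by
      refine hcoc.mono_left ?_
      rw [cocompact_eq_atBot_atTop]; exact le_sup_left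
    obtain ⟨M, hM0, hM⟩ := f.decay 1 0
    have hMx : ∀ x : ℝ, |x| * ‖f x‖ ≤ M := by
      intro x; simpa [norm_iteratedFDeriv_zero, Real.norm_eq_abs] using hM x
    have hbound : ∀ x : ℝ, ‖g x‖ ≤ M * ‖f x‖ := by
      intro x
      rw [hg]
      simp only
      rw [← hnsq (f x), Real.norm_eq_abs, abs_mul,
        abs_of_nonneg (by positivity : (0:ℝ) ≤ ‖f x‖ ^ 2)]
      nlinarith [hMx x, norm_nonneg (f x), abs_nonneg x]
    have hgtop : Tendsto g atTop (nhds 0) :=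
      squeeze_zero_norm hbound (by simpa using htop0.const_mul M)
    have hgbot : Tendsto g atBot (nhds 0) :=
      squeeze_zero_norm hbound (by simpa using hbot0.const_mul M)
    have hgcont : Continuous g := by
      refine continuous_id.mul ?_
      exact ((Complex.continuous_re.comp f.continuous).pow 2).add
        ((Complex.continuous_im.comp f.continuous).pow 2)
    have hintg' : Integrable g' := int_ff.add int_xp
    have h1 : ∫ x in Set.Ioi (0:ℝ), g' x = 0 - g 0 :=
      integral_Ioi_of_hasDerivAt_of_tendsto hgcont.continuousWithinAt
        (fun x _ => hderiv x) hintg'.integrableOn hgtop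
    have h2 : ∫ x in Set.Iic (0:ℝ), g' x = g 0 - 0 :=
      integral_Iic_of_hasDerivAt_of_tendsto hgcont.continuousWithinAt
        (fun x _ => hderiv x) hintg'.integrableOn hgbot
    have h3 : ∫ x : ℝ, g' x = 0 := by
      rw [← intervalIntegral.integral_Iic_add_Ioi hintg'.integrableOn hintg'.integrableOn, h1, h2]
      ring
    have h4 : A + ∫ x : ℝ, x * (2 * p x) = 0 := by
      rw [hA, ← integral_add int_ff int_xp]
      exact h3
    rw [integral_neg]
    linarith
  -- positivity
  have hApos : 0 < A := by
    have h0 : 0 ≤ A := integral_nonneg fun x => sq_nonneg _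
    rcases h0.lt_or_eq with h | h
    · exact h
    exfalso
    obtain ⟨x0, hx0⟩ := hne
    have hz := zero_of_nonneg _ (f.continuous.norm.pow 2) (fun x => sq_nonneg _) int_ff h.symm
    have h1 := hz x0
    exact hx0 (norm_eq_zero.mp ((pow_eq_zero_iff (two_ne_zero)).mp h1))
  have hCpos : 0 < C := by
    have h0 : 0 ≤ C := integral_nonneg fun x => sq_nonneg _
    rcases h0.lt_or_eq with h | h
    · exact h
    exfalso
    have hz := zero_of_nonneg _ ((continuous_id.smul f.continuous).norm.pow 2)
      (fun x => sq_nonneg _) int_u2 h.symm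
    have hzero : ∀ x : ℝ, x ≠ 0 → f x = 0 := by
      intro x hx
      have : ‖x • f x‖ = 0 := (pow_eq_zero_iff (two_ne_zero)).mp (hz x)
      rcases smul_eq_zero.mp (norm_eq_zero.mp this) with h' | h'
      · exact absurd h' hx
      · exact h'
    have hfz : ⇑f = fun _ => (0:ℂ) := by
      refine Continuous.ext_on (dense_compl_singleton (0:ℝ)) f.continuous continuous_const ?_
      intro x hx
      exact hzero x hx
    obtain ⟨x0, hx0⟩ := hne
    exact hx0 (by rw [hfz])
  set sb : ℝ := Real.sqrt B with hsb
  set sc : ℝ := Real.sqrt C with hsc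
  have hscpos : 0 < sc := Real.sqrt_pos.mpr hCpos
  have hsbnn : 0 ≤ sb := Real.sqrt_nonneg _
  have hscnn : 0 ≤ sc := Real.sqrt_nonneg _
  have hsbpos : 0 < sb := by nlinarith [heq, hApos]
  have hsb2 : sb ^ 2 = B := Real.sq_sqrt (by positivity : (0:ℝ) ≤ B)
  have hsc2 : sc ^ 2 = C := Real.sq_sqrt hCpos.le
  set t : ℝ := sb / sc with ht
  have htpos : 0 < t := div_pos hsbpos hscpos
  -- first inequality: A ≤ 2 ∫ u v
  set I : ℝ := ∫ x : ℝ, u x * v x with hI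
  have hpt : ∀ x : ℝ, -(x * (2 * p x)) ≤ 2 * (u x * v x) := by
    intro x
    have := hpbound x
    have := neg_abs_le (x * (2 * p x))
    linarith
  have step1 : A ≤ 2 * I := by
    rw [hA2, hI, ← integral_const_mul]
    exact integral_mono (by exact int_xp.neg) (by exact int_uv.const_mul 2) hpt
  -- Cauchy–Schwarz via the square trick
  have hsqint : ∫ x : ℝ, (t * u x - v x) ^ 2 = t ^ 2 * C - 2 * t * I + B := by
    have e1 : (fun x : ℝ => (t * u x - v x) ^ 2)
        = fun x : ℝ => t ^ 2 * ‖x • f x‖ ^ 2 - 2 * t * (u x * v x) + ‖deriv f x‖ ^ 2 := by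
      funext x
      rw [hu, hv]
      ring
    have ha : Integrable (fun x : ℝ => t ^ 2 * ‖x • f x‖ ^ 2) volume := by
      exact int_u2.const_mul _
    have hb : Integrable (fun x : ℝ => 2 * t * (u x * v x)) volume := by
      exact int_uv.const_mul _
    have hab : Integrable
        (fun x : ℝ => t ^ 2 * ‖x • f x‖ ^ 2 - 2 * t * (u x * v x)) volume := by
      exact ha.sub hb
    rw [e1, integral_add hab int_v2, integral_sub ha hb, integral_const_mul, integral_const_mul]
  have ht2C : t ^ 2 * C = B := by
    rw [ht, ← hsb2, ← hsc2]
    field_simp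
  have hub : I ≤ sb * sc := by
    have h0 : 0 ≤ ∫ x : ℝ, (t * u x - v x) ^ 2 := integral_nonneg fun x => sq_nonneg _
    rw [hsqint, ht2C] at h0
    -- 0 ≤ B - 2 t I + B, with t = sb/sc, B = sb²
    have : t * (sb * sc) = B := by
      rw [ht, ← hsb2]; field_simp
    nlinarith [htpos]
  have hlb : sb * sc ≤ I := by nlinarith [step1, heq]
  have hIeq : I = sb * sc := le_antisymm hub hlb
  -- the square integral vanishes: v = t u everywhere
  have hsqzero : ∫ x : ℝ, (t * u x - v x) ^ 2 = 0 := by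
    rw [hsqint, ht2C, hIeq]
    have : t * (sb * sc) = B := by
      rw [ht, ← hsb2]; field_simp
    linarith
  have hcontu : Continuous u := (continuous_id.smul f.continuous).norm
  have hcontv : Continuous v := hcontd.norm
  have int_sq : Integrable (fun x : ℝ => (t * u x - v x) ^ 2) := by
    have e1 : (fun x : ℝ => (t * u x - v x) ^ 2)
        = fun x : ℝ => t ^ 2 * ‖x • f x‖ ^ 2 - 2 * t * (u x * v x) + ‖deriv f x‖ ^ 2 := by
      funext x; rw [hu, hv]; ring
    rw [e1]
    exact ((int_u2.const_mul _).sub (int_uv.const_mul _)).add int_v2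
  have hveq : ∀ x : ℝ, v x = t * u x := by
    intro x
    have h := zero_of_nonneg _ (((continuous_const.mul hcontu).sub hcontv).pow 2)
      (fun x => sq_nonneg _) int_sq hsqzero x
    have := pow_eq_zero_iff (n := 2) (by norm_num) |>.mp h
    linarith [sub_eq_zero.mp (show t * u x - v x = 0 from this)]
  -- equality in the pointwise bound: u v = -(x p)
  have hptzero : ∀ x : ℝ, 2 * (u x * v x) + x * (2 * p x) = 0 := by
    have hzint : ∫ x : ℝ, (2 * (u x * v x) + x * (2 * p x)) = 0 := by
      have hxpA : ∫ x : ℝ, x * (2 * p x) = -A := by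
        rw [hA2, integral_neg, neg_neg]
      rw [integral_add (by exact int_uv.const_mul 2) int_xp, integral_const_mul, ← hI, hxpA,
        hIeq]
      linarith [heq]
    refine zero_of_nonneg _
      ((continuous_const.mul (hcontu.mul hcontv)).add
        (continuous_id.mul (continuous_const.mul hcontp)))
      (fun x => by linarith [hpt x]) ?_ hzint
    exact (int_uv.const_mul 2).add int_xp
  -- pointwise ODE
  have hode : ∀ x : ℝ, deriv f x = -((t : ℂ) * x) * f x := by
    intro x
    refine pointwise_ode (f x) (deriv f x) x t ?_ ?_
    · have := hveq x
      rw [hv, huabs x] at this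
      simpa using this
    · have h3 := hptzero x
      have h2 : u x * v x = -(x * p x) := by linarith
      rw [huabs x, hv, hp] at h2
      simpa using h2
  -- integrate the ODE
  refine ⟨f 0, t, htpos, ?_⟩
  set g : ℝ → ℂ := fun x => Complex.exp ((t : ℂ) * x ^ 2 / 2) * f x with hg
  have hgd : ∀ x : ℝ, HasDerivAt g 0 x := by
    intro x
    have hfd : HasDerivAt (⇑f) (deriv f x) x := f.differentiableAt.hasDerivAt
    have hinner : HasDerivAt (fun y : ℝ => (t : ℂ) * (y : ℂ) ^ 2 / 2) ((t : ℂ) * x) x := by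
      have hid : HasDerivAt (fun y : ℝ => ((y : ℝ) : ℂ)) 1 x := Complex.ofRealCLM.hasDerivAt
      have h2 := ((hid.mul hid).const_mul (t : ℂ)).div_const 2
      have hfe : (fun y : ℝ => (t : ℂ) * (y : ℂ) ^ 2 / 2)
          = fun y : ℝ => (t : ℂ) * (((y : ℝ) : ℂ) * ((y : ℝ) : ℂ)) / 2 := by
        funext y; ring
      rw [hfe]
      refine h2.congr_deriv ?_
      ring
    have hexp := hinner.cexp
    have h := hexp.mul hfd
    rw [hode x] at h
    refine h.congr_deriv ?_
    ring
  have hconst : ∀ x : ℝ, g x = g 0 := by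
    intro x
    exact is_const_of_deriv_eq_zero (fun y => (hgd y).differentiableAt)
      (fun y => (hgd y).deriv) x 0
  intro x
  have h := hconst x
  simp only [hg] at h
  norm_num [Complex.exp_zero] at h
  have hx : f x = (Complex.exp ((t : ℂ) * x ^ 2 / 2))⁻¹ * f 0 := by
    rw [← h, ← mul_assoc, inv_mul_cancel₀ (Complex.exp_ne_zero _), one_mul]
  rw [hx, ← Complex.exp_neg,
    show -((t : ℂ) * x ^ 2 / 2) = -(t : ℂ) * x ^ 2 / 2 from by ring, mul_comm]
end

section
/- For d ≥ 2 and every f in the Schwartz space on R^d, (d−1) ∫ |f(x)|^2/|x| dx ≤ 2 ‖f‖_{L^2} ‖∇f‖_{L^2}. -/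
open MeasureTheory Set Filter

lemma integrableOn_Ioi_of_decay {u : ℝ → ℝ} (hu : Continuous u) {C : ℝ}
    (hb : ∀ r : ℝ, 1 ≤ r → |u r| ≤ C / r ^ 2) : IntegrableOn u (Ioi (0:ℝ)) := by
  have h01 : IntegrableOn u (Ioc (0:ℝ) 1) :=
    (hu.continuousOn.integrableOn_Icc (a := 0) (b := 1)).mono_set Ioc_subset_Icc_self
  have h1 : IntegrableOn u (Ioi (1:ℝ)) := by
    have hint : IntegrableOn (fun r : ℝ => C * r ^ (-2 : ℝ)) (Ioi (1:ℝ)) :=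
      (integrableOn_Ioi_rpow_of_lt (by norm_num) one_pos).const_mul C
    refine Integrable.mono' hint hu.aestronglyMeasurable ?_
    filter_upwards [ae_restrict_mem measurableSet_Ioi] with r hr
    have hr1 : (1:ℝ) ≤ r := le_of_lt hr
    have hr0 : (0:ℝ) < r := lt_of_lt_of_le one_pos hr1
    calc ‖u r‖ = |u r| := rfl
      _ ≤ C / r ^ 2 := hb r hr1
      _ = C * r ^ (-2 : ℝ) := by
          rw [Real.rpow_neg hr0.le, Real.rpow_two]
          ring
  have : IntegrableOn u (Ioc (0:ℝ) 1 ∪ Ioi 1) := h01.union h1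
  exact this.mono_set (by
    intro x hx
    rcases le_or_gt x 1 with h | h
    · exact Or.inl ⟨hx, h⟩
    · exact Or.inr h)


variable {E : Type*} [NormedAddCommGroup E] [NormedSpace ℝ E]
  {F : Type*} [NormedAddCommGroup F] [NormedSpace ℝ F]

lemma schwartz_ray_bound (g : SchwartzMap E F) {ω : E} (hω : ‖ω‖ = 1) (k : ℕ) :
    ∃ C : ℝ, 0 < C ∧ ∀ r : ℝ, 0 ≤ r → r ^ k * ‖g (r • ω)‖ ≤ C := by
  obtain ⟨C, hC, h⟩ := g.decay k 0
  refine ⟨C, hC, fun r hr => ?_⟩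
  have := h (r • ω)
  rwa [norm_iteratedFDeriv_zero, norm_smul, hω, mul_one, Real.norm_eq_abs,
    abs_of_nonneg hr] at this

lemma schwartz_ray_cont (g : SchwartzMap E F) (ω : E) :
    Continuous fun r : ℝ => g (r • ω) :=
  g.continuous.comp (continuous_id.smul continuous_const)

lemma schwartz_ray_integrableOn (g : SchwartzMap E F) {ω : E} (hω : ‖ω‖ = 1) (m : ℕ) :
    IntegrableOn (fun r : ℝ => r ^ m * ‖g (r • ω)‖) (Ioi (0:ℝ)) := by
  obtain ⟨C, hC, hCb⟩ := schwartz_ray_bound g hω (m + 2)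
  refine integrableOn_Ioi_of_decay (C := C) (((continuous_pow m)).mul (schwartz_ray_cont g ω).norm) ?_
  intro r hr
  have hr0 : (0:ℝ) ≤ r := le_trans zero_le_one hr
  have hr2 : (0:ℝ) < r ^ 2 := by positivity
  rw [abs_of_nonneg (by positivity)]
  rw [le_div_iff₀ hr2]
  calc r ^ m * ‖g (r • ω)‖ * r ^ 2 = r ^ (m + 2) * ‖g (r • ω)‖ := by ring
    _ ≤ C := hCb r hr0

lemma one_dim_ibp (n : ℕ) (hn : 2 ≤ n) (φ φ' b : ℝ → ℝ)
    (hderiv : ∀ r : ℝ, HasDerivAt φ (φ' r) r)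
    (hbound : ∀ r : ℝ, |φ' r| ≤ b r)
    (hint1 : IntegrableOn (fun r => r ^ (n-2) * φ r) (Ioi 0))
    (hint2 : IntegrableOn (fun r => r ^ (n-1) * φ' r) (Ioi 0))
    (hint3 : IntegrableOn (fun r => r ^ (n-1) * b r) (Ioi 0))
    (htend : Tendsto (fun r => r ^ (n-1) * φ r) atTop (nhds 0)) :
    ((n : ℝ) - 1) * ∫ r in Ioi (0:ℝ), r ^ (n-2) * φ r ≤ ∫ r in Ioi (0:ℝ), r ^ (n-1) * b r := by
  have hn2 : n - 1 - 1 = n - 2 := by omega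
  have hcast : ((n - 1 : ℕ) : ℝ) = (n : ℝ) - 1 := by
    push_cast [Nat.cast_sub (by omega : 1 ≤ n)]; ring
  have hψderiv : ∀ r : ℝ, HasDerivAt (fun r => r ^ (n-1) * φ r)
      (((n:ℝ) - 1) * r ^ (n-2) * φ r + r ^ (n-1) * φ' r) r := by
    intro r
    have h := (hasDerivAt_pow (n-1) r).mul (hderiv r)
    rw [hn2, hcast] at h
    exact h
  have hc : IntegrableOn (fun r : ℝ => ((n:ℝ) - 1) * (r ^ (n-2) * φ r)) (Ioi 0) :=
    hint1.const_mul ((n:ℝ) - 1)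
  have hc' : IntegrableOn (fun r : ℝ => ((n:ℝ) - 1) * r ^ (n-2) * φ r) (Ioi 0) :=
    hc.congr (Eventually.of_forall fun x => by ring)
  have hψ' : IntegrableOn (fun r => ((n:ℝ) - 1) * r ^ (n-2) * φ r + r ^ (n-1) * φ' r) (Ioi 0) :=
    hc'.add hint2
  have hψ0 : (fun r : ℝ => r ^ (n-1) * φ r) 0 = 0 := by
    simp [zero_pow (by omega : n - 1 ≠ 0)]
  have hFTC : ∫ r in Ioi (0:ℝ), (((n:ℝ) - 1) * r ^ (n-2) * φ r + r ^ (n-1) * φ' r) = 0 := by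
    have h := integral_Ioi_of_hasDerivAt_of_tendsto
      (f := fun r => r ^ (n-1) * φ r)
      (hψderiv 0).continuousAt.continuousWithinAt
      (fun x _ => hψderiv x) hψ' htend
    rw [h]; exact sub_eq_zero.mpr hψ0.symm
  have hsplit : ∫ r in Ioi (0:ℝ), (((n:ℝ) - 1) * r ^ (n-2) * φ r + r ^ (n-1) * φ' r)
      = ((n:ℝ) - 1) * (∫ r in Ioi (0:ℝ), r ^ (n-2) * φ r) + ∫ r in Ioi (0:ℝ), r ^ (n-1) * φ' r := by
    rw [integral_add hc' hint2]
    congr 1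
    rw [← integral_const_mul]
    exact integral_congr_ae (Eventually.of_forall fun x => by ring)
  have key : ((n:ℝ) - 1) * (∫ r in Ioi (0:ℝ), r ^ (n-2) * φ r)
      = - ∫ r in Ioi (0:ℝ), r ^ (n-1) * φ' r := by
    rw [hsplit] at hFTC; linarith
  rw [key, ← integral_neg]
  refine setIntegral_mono_on hint2.neg hint3 measurableSet_Ioi ?_
  intro x hx
  have hx0 : (0:ℝ) ≤ x ^ (n-1) := le_of_lt (pow_pos hx _)
  have h1 : -(x ^ (n-1) * φ' x) ≤ x ^ (n-1) * |φ' x| := by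
    rw [← mul_neg]
    exact mul_le_mul_of_nonneg_left (neg_le_abs _) hx0
  exact h1.trans (mul_le_mul_of_nonneg_left (hbound x) hx0)


lemma hDf_cont_ray {E : Type*} [NormedAddCommGroup E] [NormedSpace ℝ E]
    (f : SchwartzMap E ℂ) (ω : E) : Continuous fun r : ℝ => ‖fderiv ℝ f (r • ω)‖ := by
  have h := (schwartz_ray_cont (SchwartzMap.fderivCLM ℝ _ _ f) ω).norm
  have : (fun r : ℝ => ‖SchwartzMap.fderivCLM ℝ _ _ f (r • ω)‖)
      = fun r : ℝ => ‖fderiv ℝ f (r • ω)‖ := by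
    funext r; rw [SchwartzMap.fderivCLM_apply]
  rwa [this] at h

lemma ray_int1 {E : Type*} [NormedAddCommGroup E] [NormedSpace ℝ E] (n : ℕ)
    (f : SchwartzMap E ℂ) {ω : E} (hω : ‖ω‖ = 1) :
    IntegrableOn (fun r : ℝ => r ^ (n-2) * ‖f (r • ω)‖ ^ 2) (Ioi (0:ℝ)) := by
  obtain ⟨M, hM, hMb⟩ := schwartz_ray_bound f hω 0
  simp only [pow_zero, one_mul] at hMb
  refine Integrable.mono' ((schwartz_ray_integrableOn f hω (n-2)).const_mul M)
    (((continuous_pow _).mul ((schwartz_ray_cont f ω).norm.pow 2)).aestronglyMeasurable) ?_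
  filter_upwards [ae_restrict_mem measurableSet_Ioi] with r hr
  have hr0 : (0:ℝ) ≤ r := le_of_lt hr
  rw [Real.norm_eq_abs, abs_of_nonneg (by positivity)]
  calc r ^ (n-2) * ‖f (r • ω)‖ ^ 2 = ‖f (r • ω)‖ * (r ^ (n-2) * ‖f (r • ω)‖) := by ring
    _ ≤ M * (r ^ (n-2) * ‖f (r • ω)‖) :=
        mul_le_mul_of_nonneg_right (hMb r hr0) (by positivity)

lemma ray_int3 {E : Type*} [NormedAddCommGroup E] [NormedSpace ℝ E] (n : ℕ)
    (f : SchwartzMap E ℂ) {ω : E} (hω : ‖ω‖ = 1) :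
    IntegrableOn
      (fun r : ℝ => r ^ (n-1) * (2 * ‖f (r • ω)‖ * ‖fderiv ℝ f (r • ω)‖)) (Ioi (0:ℝ)) := by
  obtain ⟨M', hM', hMb'⟩ := schwartz_ray_bound (SchwartzMap.fderivCLM ℝ _ _ f) hω 0
  simp only [pow_zero, one_mul] at hMb'
  have hMb' : ∀ r : ℝ, 0 ≤ r → ‖fderiv ℝ f (r • ω)‖ ≤ M' := by
    intro r hr; have := hMb' r hr; rwa [SchwartzMap.fderivCLM_apply] at this
  refine Integrable.mono' ((schwartz_ray_integrableOn f hω (n-1)).const_mul (2 * M'))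
    (((continuous_pow _).mul
      ((continuous_const.mul (schwartz_ray_cont f ω).norm).mul
        (hDf_cont_ray f ω))).aestronglyMeasurable) ?_
  filter_upwards [ae_restrict_mem measurableSet_Ioi] with r hr
  have hr0 : (0:ℝ) ≤ r := le_of_lt hr
  rw [Real.norm_eq_abs, abs_of_nonneg (by positivity)]
  calc r ^ (n-1) * (2 * ‖f (r • ω)‖ * ‖fderiv ℝ f (r • ω)‖)
      = 2 * (r ^ (n-1) * ‖f (r • ω)‖) * ‖fderiv ℝ f (r • ω)‖ := by ring
    _ ≤ 2 * (r ^ (n-1) * ‖f (r • ω)‖) * M' :=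
        mul_le_mul_of_nonneg_left (hMb' r hr0) (by positivity)
    _ = 2 * M' * (r ^ (n-1) * ‖f (r • ω)‖) := by ring

lemma ray_key {E : Type*} [NormedAddCommGroup E] [NormedSpace ℝ E] (n : ℕ) (hn : 2 ≤ n)
    (f : SchwartzMap E ℂ) {ω : E} (hω : ‖ω‖ = 1) :
    ((n:ℝ) - 1) * ∫ r in Ioi (0:ℝ), r ^ (n-2) * ‖f (r • ω)‖ ^ 2
      ≤ ∫ r in Ioi (0:ℝ), r ^ (n-1) * (2 * ‖f (r • ω)‖ * ‖fderiv ℝ f (r • ω)‖) := by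
  have hgapp : ∀ x, SchwartzMap.fderivCLM ℝ _ _ f x = fderiv ℝ f x :=
    fun x => SchwartzMap.fderivCLM_apply ℝ f x
  have hc : ∀ r : ℝ, HasDerivAt (fun r : ℝ => f (r • ω)) (fderiv ℝ f (r • ω) ω) r := by
    intro r
    have h1 : HasFDerivAt f (fderiv ℝ f (r • ω)) (r • ω) :=
      (f.differentiable.differentiableAt).hasFDerivAt
    have h2 : HasDerivAt (fun r : ℝ => r • ω) ω r := by
      simpa using (hasDerivAt_id r).smul_const ω
    exact h1.comp_hasDerivAt r h2
  have hφderiv : ∀ r : ℝ, HasDerivAt (fun r : ℝ => ‖f (r • ω)‖ ^ 2)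
      (2 * (inner ℝ (f (r • ω)) (fderiv ℝ f (r • ω) ω) : ℝ)) r :=
    fun r => (hc r).norm_sq
  have hbound : ∀ r : ℝ, |2 * (inner ℝ (f (r • ω)) (fderiv ℝ f (r • ω) ω) : ℝ)|
      ≤ 2 * ‖f (r • ω)‖ * ‖fderiv ℝ f (r • ω)‖ := by
    intro r
    have h1 : |(inner ℝ (f (r • ω)) (fderiv ℝ f (r • ω) ω) : ℝ)|
        ≤ ‖f (r • ω)‖ * ‖fderiv ℝ f (r • ω) ω‖ := abs_real_inner_le_norm _ _
    have h2 : ‖fderiv ℝ f (r • ω) ω‖ ≤ ‖fderiv ℝ f (r • ω)‖ := by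
      simpa [hω] using (fderiv ℝ f (r • ω)).le_opNorm ω
    have h3 : ‖f (r • ω)‖ * ‖fderiv ℝ f (r • ω) ω‖
        ≤ ‖f (r • ω)‖ * ‖fderiv ℝ f (r • ω)‖ :=
      mul_le_mul_of_nonneg_left h2 (norm_nonneg _)
    rw [abs_mul, abs_two]
    nlinarith [abs_nonneg (inner ℝ (f (r • ω)) (fderiv ℝ f (r • ω) ω) : ℝ)]
  obtain ⟨M, hM, hMb⟩ := schwartz_ray_bound f hω 0
  obtain ⟨M', hM', hMb'⟩ := schwartz_ray_bound (SchwartzMap.fderivCLM ℝ _ _ f) hω 0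
  simp only [pow_zero, one_mul] at hMb hMb'
  have hMb' : ∀ r : ℝ, 0 ≤ r → ‖fderiv ℝ f (r • ω)‖ ≤ M' := by
    intro r hr; have := hMb' r hr; rwa [hgapp] at this
  have hDf_cont : Continuous fun r : ℝ => ‖fderiv ℝ f (r • ω)‖ := by
    have := (schwartz_ray_cont (SchwartzMap.fderivCLM ℝ _ _ f) ω).norm
    simpa [hgapp] using this
  have hf_cont := (schwartz_ray_cont f ω).norm
  have hint1 : IntegrableOn (fun r : ℝ => r ^ (n-2) * ‖f (r • ω)‖ ^ 2) (Ioi (0:ℝ)) :=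
    ray_int1 n f hω
  have hint3 : IntegrableOn
      (fun r : ℝ => r ^ (n-1) * (2 * ‖f (r • ω)‖ * ‖fderiv ℝ f (r • ω)‖)) (Ioi (0:ℝ)) :=
    ray_int3 n f hω
  have hφ'cont : Continuous
      (fun r : ℝ => 2 * (inner ℝ (f (r • ω)) (fderiv ℝ f (r • ω) ω) : ℝ)) := by
    have hc' : Continuous fun r : ℝ => fderiv ℝ f (r • ω) ω := by
      have h1 : Continuous fun r : ℝ => SchwartzMap.fderivCLM ℝ _ _ f (r • ω) :=
        schwartz_ray_cont (SchwartzMap.fderivCLM ℝ _ _ f) ω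
      have h2 : Continuous fun r : ℝ => (SchwartzMap.fderivCLM ℝ _ _ f (r • ω)) ω :=
        (ContinuousLinearMap.apply ℝ ℂ ω).continuous.comp h1
      simpa [hgapp] using h2
    exact continuous_const.mul
      (continuous_inner.comp ((schwartz_ray_cont f ω).prodMk hc'))
  have hint2 : IntegrableOn
      (fun r : ℝ => r ^ (n-1) * (2 * (inner ℝ (f (r • ω)) (fderiv ℝ f (r • ω) ω) : ℝ)))
      (Ioi (0:ℝ)) := by
    refine Integrable.mono' hint3 (((continuous_pow _).mul hφ'cont).aestronglyMeasurable) ?_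
    filter_upwards [ae_restrict_mem measurableSet_Ioi] with r hr
    have hr0 : (0:ℝ) ≤ r := le_of_lt hr
    rw [Real.norm_eq_abs, abs_mul, abs_of_nonneg (by positivity : (0:ℝ) ≤ r ^ (n-1))]
    exact mul_le_mul_of_nonneg_left (hbound r) (by positivity)
  have htend : Tendsto (fun r : ℝ => r ^ (n-1) * ‖f (r • ω)‖ ^ 2) atTop (nhds 0) := by
    obtain ⟨C, hC, hCb⟩ := schwartz_ray_bound f hω n
    refine squeeze_zero' (g := fun r : ℝ => M * C * r⁻¹) ?_ ?_ ?_
    · filter_upwards [eventually_ge_atTop (0:ℝ)] with r hr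
      positivity
    · filter_upwards [eventually_ge_atTop (1:ℝ)] with r hr1
      have hr0 : (0:ℝ) < r := lt_of_lt_of_le one_pos hr1
      have h1 : r ^ n * ‖f (r • ω)‖ ≤ C := hCb r hr0.le
      have hpow : r ^ n = r ^ (n-1) * r := by
        rw [← pow_succ]; congr 1; omega
      have h2 : r ^ (n-1) * ‖f (r • ω)‖ ≤ C * r⁻¹ := by
        rw [hpow] at h1
        have h3 := mul_le_mul_of_nonneg_right h1 (inv_nonneg.mpr hr0.le)
        calc r ^ (n-1) * ‖f (r • ω)‖ = r ^ (n-1) * r * ‖f (r • ω)‖ * r⁻¹ := by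
              field_simp
          _ ≤ C * r⁻¹ := h3
      calc r ^ (n-1) * ‖f (r • ω)‖ ^ 2 = (r ^ (n-1) * ‖f (r • ω)‖) * ‖f (r • ω)‖ := by ring
        _ ≤ (C * r⁻¹) * M := by
            refine mul_le_mul h2 (hMb r hr0.le) (norm_nonneg _) ?_
            positivity
        _ = M * C * r⁻¹ := by ring
    · have : Tendsto (fun r : ℝ => (M * C) * r⁻¹) atTop (nhds ((M * C) * 0)) :=
        tendsto_inv_atTop_zero.const_mul (M * C)
      simpa [mul_assoc] using this
  exact one_dim_ibp n hn _ _ _ hφderiv hbound hint1 hint2 hint3 htend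
open scoped ENNReal

local notation "dim" => Module.finrank ℝ

open Metric
open scoped ENNReal

lemma polar_lintegral {E : Type*} [NormedAddCommGroup E] [NormedSpace ℝ E] [MeasurableSpace E]
    [BorelSpace E] [FiniteDimensional ℝ E] [Nontrivial E]
    (μ : Measure E) [μ.IsAddHaarMeasure] (g : E → ℝ≥0∞) (hg : Measurable g) :
    ∫⁻ x, g x ∂μ = ∫⁻ ω : sphere (0:E) 1, ∫⁻ r in Ioi (0:ℝ),
      ENNReal.ofReal (r ^ (dim E - 1)) * g (r • (ω : E)) ∂volume ∂μ.toSphere := by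
  have hsm : Measurable fun z : sphere (0:E) 1 × Ioi (0:ℝ) => g (z.2.1 • (z.1 : E)) := by
    apply hg.comp
    exact (continuous_subtype_val.snd'.smul continuous_subtype_val.fst').measurable
  calc ∫⁻ x, g x ∂μ = ∫⁻ x in ({0}ᶜ : Set E), g x ∂μ := by
        rw [← lintegral_add_compl g (measurableSet_singleton (0:E))]
        rw [setLIntegral_measure_zero _ _ (measure_singleton 0), zero_add]
    _ = ∫⁻ x : ({0}ᶜ : Set E), g x ∂(μ.comap Subtype.val) := by
        rw [lintegral_subtype_comap (measurableSet_singleton (0:E)).compl]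
    _ = ∫⁻ z : sphere (0:E) 1 × Ioi (0:ℝ), g (z.2.1 • (z.1 : E))
          ∂(μ.toSphere.prod (Measure.volumeIoiPow (dim E - 1))) := by
        rw [← (μ.measurePreserving_homeomorphUnitSphereProd).lintegral_comp_emb
          (Homeomorph.measurableEmbedding _)]
        refine lintegral_congr fun x => ?_
        have : ((homeomorphUnitSphereProd E x).2 : ℝ) • ((homeomorphUnitSphereProd E x).1 : E)
            = (x : E) := by
          simp only [homeomorphUnitSphereProd_apply_snd_coe,
            homeomorphUnitSphereProd_apply_fst_coe]
          rw [smul_smul, mul_inv_cancel₀ (norm_ne_zero_iff.2 x.2), one_smul]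
        simp only [Function.comp_apply, this]
    _ = ∫⁻ ω : sphere (0:E) 1, ∫⁻ r : Ioi (0:ℝ), g (r.1 • (ω : E))
          ∂(Measure.volumeIoiPow (dim E - 1)) ∂μ.toSphere := by
        exact lintegral_prod _ hsm.aemeasurable
    _ = ∫⁻ ω : sphere (0:E) 1, ∫⁻ r in Ioi (0:ℝ),
          ENNReal.ofReal (r ^ (dim E - 1)) * g (r • (ω : E)) ∂volume ∂μ.toSphere := by
        refine lintegral_congr fun ω => ?_
        rw [Measure.volumeIoiPow]
        rw [lintegral_withDensity_eq_lintegral_mul _ ?_ ?_]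
        · rw [← lintegral_subtype_comap measurableSet_Ioi
            (fun r : ℝ => ENNReal.ofReal (r ^ (dim E - 1)) * g (r • (ω : E)))]
          exact lintegral_congr fun r => rfl
        · exact ENNReal.measurable_ofReal.comp (measurable_subtype_coe.pow_const _)
        · exact hg.comp (measurable_subtype_coe.smul_const _)

open Metric
open scoped ENNReal

/-- Commutator inequality: for `d ≥ 2` and Schwartz `f` on `ℝ^d`,
`(d−1) ∫ |f(x)|²/|x| dx ≤ 2 ‖f‖_{L²} ‖∇f‖_{L²}`. -/
theorem hardy_type_inequality_order_one (d : ℕ) (hd : 2 ≤ d)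
    (f : SchwartzMap (EuclideanSpace ℝ (Fin d)) ℂ) :
    ((d : ℝ) - 1) * (∫ x : EuclideanSpace ℝ (Fin d), ‖f x‖ ^ 2 / ‖x‖) ≤
      2 * Real.sqrt (∫ x : EuclideanSpace ℝ (Fin d), ‖f x‖ ^ 2) *
        Real.sqrt (∫ x : EuclideanSpace ℝ (Fin d), ‖fderiv ℝ f x‖ ^ 2) := by
  set E := EuclideanSpace ℝ (Fin d) with hE
  have hfinrank : Module.finrank ℝ E = d := finrank_euclideanSpace_fin
  haveI : Nontrivial E :=
    Module.nontrivial_of_finrank_pos (R := ℝ) (by omega : 0 < Module.finrank ℝ E)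
  have hd1 : (0:ℝ) ≤ (d:ℝ) - 1 := by
    have : (2:ℝ) ≤ (d:ℝ) := by exact_mod_cast hd
    linarith
  have hgapp : ∀ x, SchwartzMap.fderivCLM ℝ _ _ f x = fderiv ℝ f x :=
    fun x => SchwartzMap.fderivCLM_apply ℝ f x
  have hDf_cont : Continuous fun x : E => fderiv ℝ f x :=
    (SchwartzMap.fderivCLM ℝ _ _ f).continuous.congr hgapp
  -- global bounds and integrability
  obtain ⟨Mf, hMf, hMfb⟩ := f.decay 0 0
  simp only [pow_zero, one_mul, norm_iteratedFDeriv_zero] at hMfb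
  obtain ⟨Mg, hMg, hMgb⟩ := (SchwartzMap.fderivCLM ℝ _ _ f).decay 0 0
  simp only [pow_zero, one_mul, norm_iteratedFDeriv_zero] at hMgb
  have hMgb : ∀ x : E, ‖fderiv ℝ f x‖ ≤ Mg := fun x => by
    have := hMgb x; rwa [hgapp] at this
  have h_int_f : Integrable (fun x : E => ‖f x‖) := f.integrable.norm
  have h_int_Df : Integrable (fun x : E => ‖fderiv ℝ f x‖) := by
    refine (((SchwartzMap.fderivCLM ℝ _ _ f).integrable (μ := volume)).norm).congr ?_
    exact Filter.Eventually.of_forall fun x => by simp only [hgapp]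
  have h_int_fsq : Integrable (fun x : E => ‖f x‖ ^ 2) := by
    refine Integrable.mono' (h_int_f.const_mul Mf)
      (f.continuous.norm.pow 2).aestronglyMeasurable ?_
    refine Filter.Eventually.of_forall fun x => ?_
    rw [Real.norm_eq_abs, abs_of_nonneg (by positivity), sq]
    exact mul_le_mul_of_nonneg_right (hMfb x) (norm_nonneg _)
  have h_int_Dfsq : Integrable (fun x : E => ‖fderiv ℝ f x‖ ^ 2) := by
    refine Integrable.mono' (h_int_Df.const_mul Mg)
      (hDf_cont.norm.pow 2).aestronglyMeasurable ?_
    refine Filter.Eventually.of_forall fun x => ?_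
    rw [Real.norm_eq_abs, abs_of_nonneg (by positivity), sq]
    exact mul_le_mul_of_nonneg_right (hMgb x) (norm_nonneg _)
  have h_int_prod : Integrable (fun x : E => 2 * ‖f x‖ * ‖fderiv ℝ f x‖) := by
    refine Integrable.mono' (h_int_Df.const_mul (2 * Mf))
      ((continuous_const.mul f.continuous.norm).mul hDf_cont.norm).aestronglyMeasurable ?_
    refine Filter.Eventually.of_forall fun x => ?_
    rw [Real.norm_eq_abs, abs_of_nonneg (by positivity)]
    have h1 := mul_le_mul_of_nonneg_right (hMfb x) (norm_nonneg (fderiv ℝ f x))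
    nlinarith [norm_nonneg (fderiv ℝ f x)]
  -- lintegral quantities
  set g₁ : E → ℝ≥0∞ := fun x => ENNReal.ofReal (‖f x‖ ^ 2 / ‖x‖) with hg₁
  set g₂ : E → ℝ≥0∞ := fun x => ENNReal.ofReal (2 * ‖f x‖ * ‖fderiv ℝ f x‖) with hg₂
  have hg₁m : Measurable g₁ :=
    ENNReal.measurable_ofReal.comp ((f.continuous.norm.pow 2).measurable.div
      continuous_norm.measurable)
  have hg₂m : Measurable g₂ :=
    ENNReal.measurable_ofReal.comp
      ((continuous_const.mul f.continuous.norm).mul hDf_cont.norm).measurable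
  have hpolar₁ := polar_lintegral (volume : Measure E) g₁ hg₁m
  have hpolar₂ := polar_lintegral (volume : Measure E) g₂ hg₂m
  rw [hfinrank] at hpolar₁ hpolar₂
  -- key inequality at the level of lintegrals
  have hkey : ENNReal.ofReal ((d:ℝ) - 1) * ∫⁻ x, g₁ x ∂(volume : Measure E)
      ≤ ∫⁻ x, g₂ x ∂(volume : Measure E) := by
    rw [hpolar₁, hpolar₂, ← lintegral_const_mul' _ _ ENNReal.ofReal_ne_top]
    refine lintegral_mono fun ω => ?_
    have hω : ‖(ω : E)‖ = 1 := mem_sphere_zero_iff_norm.mp ω.2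
    have hinner₁ : ∫⁻ r in Ioi (0:ℝ), ENNReal.ofReal (r ^ (d - 1)) * g₁ (r • (ω : E)) ∂volume
        = ENNReal.ofReal (∫ r in Ioi (0:ℝ), r ^ (d-2) * ‖f (r • (ω : E))‖ ^ 2) := by
      rw [ofReal_integral_eq_lintegral_ofReal (ray_int1 d f hω) (by
        filter_upwards [ae_restrict_mem measurableSet_Ioi] with r hr
        have hr0 : (0:ℝ) ≤ r := le_of_lt hr
        positivity)]
      refine setLIntegral_congr_fun measurableSet_Ioi ?_
      intro r hr
      have hr0 : (0:ℝ) < r := hr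
      have hnorm : ‖r • (ω : E)‖ = r := by
        rw [norm_smul, hω, mul_one, Real.norm_eq_abs, abs_of_pos hr0]
      simp only [hg₁, hnorm]
      rw [← ENNReal.ofReal_mul (pow_nonneg hr0.le _)]
      congr 1
      have hpow : r ^ (d-1) = r ^ (d-2) * r := by
        rw [← pow_succ]; congr 1; omega
      rw [hpow]
      field_simp
    have hinner₂ : ∫⁻ r in Ioi (0:ℝ), ENNReal.ofReal (r ^ (d - 1)) * g₂ (r • (ω : E)) ∂volume
        = ENNReal.ofReal (∫ r in Ioi (0:ℝ),
            r ^ (d-1) * (2 * ‖f (r • (ω : E))‖ * ‖fderiv ℝ f (r • (ω : E))‖)) := by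
      rw [ofReal_integral_eq_lintegral_ofReal (ray_int3 d f hω) (by
        filter_upwards [ae_restrict_mem measurableSet_Ioi] with r hr
        have hr0 : (0:ℝ) ≤ r := le_of_lt hr
        positivity)]
      refine setLIntegral_congr_fun measurableSet_Ioi ?_
      intro r hr
      have hr0 : (0:ℝ) < r := hr
      simp only [hg₂]
      rw [← ENNReal.ofReal_mul (pow_nonneg hr0.le _)]
    rw [hinner₁, hinner₂, ← ENNReal.ofReal_mul hd1]
    exact ENNReal.ofReal_le_ofReal (ray_key d hd f hω)
  -- convert back to Bochner integrals
  have hB : ∫⁻ x, g₂ x ∂(volume : Measure E)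
      = ENNReal.ofReal (∫ x : E, 2 * ‖f x‖ * ‖fderiv ℝ f x‖) :=
    (ofReal_integral_eq_lintegral_ofReal h_int_prod
      (Filter.Eventually.of_forall fun x => by positivity)).symm
  have hBne : ∫⁻ x, g₂ x ∂(volume : Measure E) ≠ ⊤ := by
    rw [hB]; exact ENNReal.ofReal_ne_top
  have hA : ∫ x : E, ‖f x‖ ^ 2 / ‖x‖ = (∫⁻ x, g₁ x ∂(volume : Measure E)).toReal := by
    rw [integral_eq_lintegral_of_nonneg_ae (f := fun x : E => ‖f x‖ ^ 2 / ‖x‖)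
      (Filter.Eventually.of_forall fun x => by dsimp only [Pi.zero_apply]; positivity)
      ((f.continuous.norm.pow 2).measurable.div continuous_norm.measurable).aestronglyMeasurable]
  have step1 : ((d:ℝ) - 1) * ∫ x : E, ‖f x‖ ^ 2 / ‖x‖
      ≤ ∫ x : E, 2 * ‖f x‖ * ‖fderiv ℝ f x‖ := by
    have h1 : ((d:ℝ) - 1) * ∫ x : E, ‖f x‖ ^ 2 / ‖x‖
        = (ENNReal.ofReal ((d:ℝ) - 1) * ∫⁻ x, g₁ x ∂(volume : Measure E)).toReal := by
      rw [hA, ENNReal.toReal_mul, ENNReal.toReal_ofReal hd1]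
    have h2 := ENNReal.toReal_mono hBne hkey
    rw [h1]
    refine h2.trans_eq ?_
    rw [hB, ENNReal.toReal_ofReal (integral_nonneg fun x => by positivity)]
  -- Cauchy–Schwarz
  have hmemf : MemLp (fun x : E => ‖f x‖) (ENNReal.ofReal 2) volume := by
    rw [ENNReal.ofReal_ofNat]
    exact (memLp_two_iff_integrable_sq f.continuous.norm.aestronglyMeasurable).mpr h_int_fsq
  have hmemDf : MemLp (fun x : E => ‖fderiv ℝ f x‖) (ENNReal.ofReal 2) volume := by
    rw [ENNReal.ofReal_ofNat]
    exact (memLp_two_iff_integrable_sq hDf_cont.norm.aestronglyMeasurable).mpr h_int_Dfsq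
  have hholder := integral_mul_le_Lp_mul_Lq_of_nonneg
    (μ := (volume : Measure E)) (p := 2) (q := 2)
    ⟨by norm_num, by norm_num, by norm_num⟩
    (Filter.Eventually.of_forall fun x => norm_nonneg (f x))
    (Filter.Eventually.of_forall fun x => norm_nonneg (fderiv ℝ f x))
    hmemf hmemDf
  have hrw1 : ∫ x : E, ‖f x‖ ^ (2:ℝ) = ∫ x : E, ‖f x‖ ^ 2 :=
    integral_congr_ae (Filter.Eventually.of_forall fun x => by
      simp [Real.rpow_two])
  have hrw2 : ∫ x : E, ‖fderiv ℝ f x‖ ^ (2:ℝ) = ∫ x : E, ‖fderiv ℝ f x‖ ^ 2 :=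
    integral_congr_ae (Filter.Eventually.of_forall fun x => by
      simp [Real.rpow_two])
  rw [hrw1, hrw2] at hholder
  have step2 : ∫ x : E, 2 * ‖f x‖ * ‖fderiv ℝ f x‖
      ≤ 2 * Real.sqrt (∫ x : E, ‖f x‖ ^ 2) * Real.sqrt (∫ x : E, ‖fderiv ℝ f x‖ ^ 2) := by
    have h3 : ∫ x : E, 2 * ‖f x‖ * ‖fderiv ℝ f x‖ = 2 * ∫ x : E, ‖f x‖ * ‖fderiv ℝ f x‖ := by
      rw [← integral_const_mul]
      exact integral_congr_ae (Filter.Eventually.of_forall fun x => by ring)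
    rw [h3, Real.sqrt_eq_rpow, Real.sqrt_eq_rpow, mul_assoc]
    have := mul_le_mul_of_nonneg_left hholder (by norm_num : (0:ℝ) ≤ 2)
    convert this using 3 <;> norm_num
  exact step1.trans step2
end

section
/- If f : R → C satisfies |f(x)| ≤ C e^{-x^2/2}, |f̂(ξ)| ≤ C e^{-ξ^2/2}, and additionally f(x) e^{x^2/2} → 0 as |x| → ∞ (i.e. f is o(e^{-x^2/2})), then f = 0. -/
open MeasureTheory Filter

/-- Fourier transform on `ℝ` with normalization `(2π)^{-1/2}`. -/
noncomputable def ft (f : ℝ → ℂ) (ξ : ℝ) : ℂ :=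
  ((Real.sqrt (2 * Real.pi))⁻¹ : ℝ) * ∫ x : ℝ, f x * Complex.exp (-Complex.I * x * ξ)

open Complex Set Metric FourierTransform

local notation "π" => Real.pi

set_option linter.unnecessarySimpa false

/-- The complex extension `z ↦ ∫ f t e^{-itz}` of the (unnormalized) Fourier transform. -/
noncomputable def Fc (f : ℝ → ℂ) (z : ℂ) : ℂ := ∫ t : ℝ, f t * Complex.exp (-Complex.I * t * z)

lemma int_gauss (y : ℝ) : Integrable (fun t : ℝ => Real.exp (-((t - y)^2) / 2)) := by
  have h : Integrable (fun x : ℝ => Real.exp (-(1/2 : ℝ) * x ^ 2)) :=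
    integrable_exp_neg_mul_sq (by norm_num)
  have h2 := h.comp_sub_right y
  refine h2.congr ?_
  filter_upwards with t
  ring_nf

lemma integral_gauss (y : ℝ) :
    ∫ t : ℝ, Real.exp (-((t - y)^2) / 2) = Real.sqrt (2 * Real.pi) := by
  have h1 : (fun t : ℝ => Real.exp (-((t - y)^2) / 2))
      = fun t : ℝ => (fun x : ℝ => Real.exp (-(1/2 : ℝ) * x ^ 2)) (t - y) := by
    funext t; ring_nf
  rw [h1, integral_sub_right_eq_self (fun x : ℝ => Real.exp (-(1/2 : ℝ) * x ^ 2)) y,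
    integral_gaussian]
  congr 1
  rw [div_div_eq_mul_div, div_one, mul_comm]

lemma integrable_gauss_abs (a : ℝ) :
    Integrable (fun t : ℝ => Real.exp (-t^2/2 + a * |t|)) := by
  have h1 : Integrable (fun t : ℝ =>
      Real.exp (a^2/2) * (Real.exp (-((t - a)^2) / 2) + Real.exp (-((t - -a)^2) / 2))) :=
    ((int_gauss a).add (int_gauss (-a))).const_mul _
  refine h1.mono' ?_ ?_
  · exact (Continuous.rexp (by continuity)).aestronglyMeasurable
  · filter_upwards with t
    rw [Real.norm_of_nonneg (Real.exp_pos _).le]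
    rcases abs_cases t with ⟨h, _⟩ | ⟨h, _⟩ <;> rw [h]
    · have e1 : -t^2/2 + a*t = a^2/2 + (-((t - a)^2) / 2) := by ring
      rw [e1, Real.exp_add]
      have := (Real.exp_pos (-((t - -a)^2) / 2)).le
      nlinarith [Real.exp_pos (a^2/2), Real.exp_pos (-((t - a)^2) / 2)]
    · have e1 : -t^2/2 + a*(-t) = a^2/2 + (-((t - -a)^2) / 2) := by ring
      rw [e1, Real.exp_add]
      have := (Real.exp_pos (-((t - a)^2) / 2)).le
      nlinarith [Real.exp_pos (a^2/2), Real.exp_pos (-((t - -a)^2) / 2)]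

section F

variable {f : ℝ → ℂ} {C : ℝ}

lemma norm_kernel (t : ℝ) (z : ℂ) :
    ‖Complex.exp (-Complex.I * t * z)‖ = Real.exp (t * z.im) := by
  rw [Complex.norm_exp]
  congr 1
  simp [Complex.mul_re, Complex.mul_im]

lemma norm_integrand_le (hf : ∀ x : ℝ, ‖f x‖ ≤ C * Real.exp (-x ^ 2 / 2)) (z : ℂ) (t : ℝ) :
    ‖f t * Complex.exp (-Complex.I * t * z)‖
      ≤ (C * Real.exp (z.im^2/2)) * Real.exp (-((t - z.im)^2) / 2) := by
  rw [norm_mul, norm_kernel]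
  calc ‖f t‖ * Real.exp (t * z.im) ≤ (C * Real.exp (-t ^ 2 / 2)) * Real.exp (t * z.im) := by
        gcongr; exact hf t
    _ = (C * Real.exp (z.im^2/2)) * Real.exp (-((t - z.im)^2) / 2) := by
        rw [mul_assoc, mul_assoc, ← Real.exp_add, ← Real.exp_add]
        congr 2
        ring

lemma integrand_integrable (hmeas : Measurable f)
    (hf : ∀ x : ℝ, ‖f x‖ ≤ C * Real.exp (-x ^ 2 / 2)) (z : ℂ) :
    Integrable (fun t : ℝ => f t * Complex.exp (-Complex.I * t * z)) := by
  refine (((int_gauss z.im).const_mul (C * Real.exp (z.im^2/2))).mono' ?_ ?_)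
  · exact (hmeas.aestronglyMeasurable.mul
      ((Complex.continuous_exp.comp (by continuity)).aestronglyMeasurable))
  · filter_upwards with t using norm_integrand_le hf z t

lemma f_integrable (hmeas : Measurable f)
    (hf : ∀ x : ℝ, ‖f x‖ ≤ C * Real.exp (-x ^ 2 / 2)) : Integrable f := by
  have h := integrand_integrable hmeas hf 0
  simpa using h

lemma Fc_le (hmeas : Measurable f) (hf : ∀ x : ℝ, ‖f x‖ ≤ C * Real.exp (-x ^ 2 / 2)) (z : ℂ) :
    ‖Fc f z‖ ≤ (C * Real.sqrt (2 * Real.pi)) * Real.exp (z.im^2/2) := by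
  refine (norm_integral_le_integral_norm _).trans ?_
  have h2 : ∫ t : ℝ, ‖f t * Complex.exp (-Complex.I * t * z)‖
      ≤ ∫ t : ℝ, (C * Real.exp (z.im^2/2)) * Real.exp (-((t - z.im)^2) / 2) := by
    refine integral_mono ((integrand_integrable hmeas hf z).norm)
      ((int_gauss z.im).const_mul _) ?_
    intro t; exact norm_integrand_le hf z t
  refine h2.trans ?_
  rw [integral_const_mul, integral_gauss]
  ring_nf
  exact le_refl _

lemma Fc_differentiable (hC : 0 < C) (hmeas : Measurable f)
    (hf : ∀ x : ℝ, ‖f x‖ ≤ C * Real.exp (-x ^ 2 / 2)) :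
    Differentiable ℂ (Fc f) := by
  intro z₀
  set A : ℝ := |z₀.im| + 1 with hA
  have hkey := hasDerivAt_integral_of_dominated_loc_of_deriv_le (μ := volume)
    (F := fun (z : ℂ) (t : ℝ) => f t * Complex.exp (-Complex.I * t * z))
    (F' := fun (z : ℂ) (t : ℝ) => f t * (Complex.exp (-Complex.I * t * z) * (-Complex.I * t)))
    (x₀ := z₀) (bound := fun t : ℝ => C * Real.exp (-t^2/2 + (A + 1) * |t|)) (s := Metric.ball z₀ 1)
    (Metric.ball_mem_nhds z₀ one_pos)
    (Filter.Eventually.of_forall fun z => (hmeas.aestronglyMeasurable.mul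
      ((Complex.continuous_exp.comp (by continuity)).aestronglyMeasurable)))
    (integrand_integrable hmeas hf z₀)
    (hmeas.aestronglyMeasurable.mul
      ((Complex.continuous_exp.comp (by continuity)).mul (by continuity)).aestronglyMeasurable)
    ?_ ((integrable_gauss_abs (A + 1)).const_mul C) ?_
  · exact hkey.2.differentiableAt
  · filter_upwards with t
    intro z hz
    rw [norm_mul, norm_mul, norm_kernel]
    have him : |z.im| ≤ A := by
      have h1 : |z.im - z₀.im| ≤ ‖z - z₀‖ := by
        simpa using Complex.abs_im_le_norm (z - z₀)
      have h2 : ‖z - z₀‖ < 1 := by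
        simpa [Complex.dist_eq] using (mem_ball.1 hz)
      rw [hA]
      calc |z.im| ≤ |z₀.im| + |z.im - z₀.im| := by
            have := abs_sub_abs_le_abs_sub z.im z₀.im
            have := abs_add_le z₀.im (z.im - z₀.im)
            calc |z.im| = |z₀.im + (z.im - z₀.im)| := by ring_nf
              _ ≤ |z₀.im| + |z.im - z₀.im| := abs_add_le _ _
        _ ≤ |z₀.im| + 1 := by linarith
    have h3 : ‖-Complex.I * t‖ = |t| := by
      simp
    rw [h3]
    calc ‖f t‖ * (Real.exp (t * z.im) * |t|)
        ≤ (C * Real.exp (-t^2/2)) * (Real.exp (A * |t|) * Real.exp (|t|)) := by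
          have e1 : Real.exp (t * z.im) ≤ Real.exp (A * |t|) := by
            refine Real.exp_le_exp.2 ?_
            calc t * z.im ≤ |t * z.im| := le_abs_self _
              _ = |t| * |z.im| := abs_mul t z.im
              _ ≤ |t| * A := mul_le_mul_of_nonneg_left him (abs_nonneg t)
              _ = A * |t| := mul_comm _ _
          have e2 : |t| ≤ Real.exp |t| := by
            calc |t| ≤ |t| + 1 := by linarith
              _ ≤ Real.exp |t| := Real.add_one_le_exp _
          gcongr
          exact hf t
    _ = C * Real.exp (-t^2/2 + (A + 1) * |t|) := by
          rw [mul_assoc, ← Real.exp_add, ← Real.exp_add]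
          congr 2
          ring
  · filter_upwards with t
    intro z hz
    have h1 : HasDerivAt (fun z : ℂ => -Complex.I * t * z) (-Complex.I * t) z := by
      simpa using (hasDerivAt_id z).const_mul (-Complex.I * (t:ℂ))
    exact (h1.cexp.const_mul (f t))

end F

/-- Phragmén–Lindelöf for a sector of opening < π/2, for entire functions with
quadratic-exponential growth. -/
lemma sector_PL (g : ℂ → ℂ) {K B : ℝ} {a b : ℝ} (hab : a < b) (hb2 : b - a < π / 2)
    (hd : Differentiable ℂ g)
    (hgrow : ∀ z : ℂ, ‖g z‖ ≤ K * Real.exp (B * ‖z‖ ^ 2))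
    (hra : ∀ r : ℝ, 0 ≤ r → ‖g (r * Complex.exp (a * Complex.I))‖ ≤ K)
    (hrb : ∀ r : ℝ, 0 ≤ r → ‖g (r * Complex.exp (b * Complex.I))‖ ≤ K)
    {z : ℂ} (hz : z ≠ 0) (hza : a ≤ z.arg) (hzb : z.arg ≤ b) : ‖g z‖ ≤ K := by
  obtain ⟨ζ, hζa, hζb, rfl⟩ : ∃ ζ : ℂ, a ≤ ζ.im ∧ ζ.im ≤ b ∧ Complex.exp ζ = z :=
    ⟨Complex.log z, by rwa [Complex.log_im], by rwa [Complex.log_im], Complex.exp_log hz⟩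
  have hKnn : 0 ≤ K := le_trans (norm_nonneg _) (hra 0 le_rfl)
  change ‖(g ∘ Complex.exp) ζ‖ ≤ K
  refine PhragmenLindelof.horizontal_strip (a := a) (b := b) (C := K)
    ((hd.comp Complex.differentiable_exp).diffContOnCl) ?_ ?_ ?_ hζa hζb
  · refine ⟨2, ?_, max B 0 + 1, ?_⟩
    · rw [lt_div_iff₀ (by linarith)]
      linarith
    · refine Asymptotics.IsBigO.of_bound K ?_
      filter_upwards with w
      rw [Function.comp_apply, Real.norm_of_nonneg (Real.exp_pos _).le]
      refine (hgrow _).trans ?_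
      gcongr K * Real.exp ?_
      rw [Complex.norm_exp, ← Real.exp_nat_mul]
      calc B * Real.exp ((2:ℕ) * w.re) ≤ (max B 0) * Real.exp (2 * |w.re|) := by
            rcases le_total B 0 with hB | hB
            · refine le_trans (mul_nonpos_of_nonpos_of_nonneg hB (Real.exp_pos _).le) ?_
              positivity
            · push_cast
              rw [max_eq_left hB]
              gcongr
              · exact le_abs_self _
        _ ≤ (max B 0 + 1) * Real.exp (2 * |w.re|) := by
            have := (Real.exp_pos (2 * |w.re|)).le
            nlinarith
  · intro w hw
    have hwe : Complex.exp w = (Real.exp w.re : ℝ) * Complex.exp (a * Complex.I) := by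
      conv_lhs => rw [← Complex.re_add_im w, hw]
      rw [Complex.exp_add, Complex.ofReal_exp]
    rw [Function.comp_apply, hwe]
    exact hra _ (Real.exp_pos _).le
  · intro w hw
    have hwe : Complex.exp w = (Real.exp w.re : ℝ) * Complex.exp (b * Complex.I) := by
      conv_lhs => rw [← Complex.re_add_im w, hw]
      rw [Complex.exp_add, Complex.ofReal_exp]
    rw [Function.comp_apply, hwe]
    exact hrb _ (Real.exp_pos _).le

lemma diff_conj_conj {G : ℂ → ℂ} (hG : Differentiable ℂ G) :
    Differentiable ℂ fun z => (starRingEnd ℂ) (G ((starRingEnd ℂ) z)) := by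
  intro z₀
  set d := deriv G ((starRingEnd ℂ) z₀) with hd
  have h1 : Filter.Tendsto (slope G ((starRingEnd ℂ) z₀))
      (nhdsWithin ((starRingEnd ℂ) z₀) {((starRingEnd ℂ) z₀)}ᶜ) (nhds d) :=
    hasDerivAt_iff_tendsto_slope.1 (hG _).hasDerivAt
  have h2 : Filter.Tendsto (fun z : ℂ => (starRingEnd ℂ) z)
      (nhdsWithin z₀ {z₀}ᶜ) (nhdsWithin ((starRingEnd ℂ) z₀) {((starRingEnd ℂ) z₀)}ᶜ) := by
    refine tendsto_nhdsWithin_of_tendsto_nhds_of_eventually_within _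
      ((Complex.continuous_conj.tendsto z₀).mono_left nhdsWithin_le_nhds) ?_
    filter_upwards [self_mem_nhdsWithin] with z hz
    exact fun h => hz ((starRingEnd ℂ).injective h)
  have h3 : Filter.Tendsto (fun z : ℂ => (starRingEnd ℂ) (slope G ((starRingEnd ℂ) z₀) ((starRingEnd ℂ) z)))
      (nhdsWithin z₀ {z₀}ᶜ) (nhds ((starRingEnd ℂ) d)) :=
    (Complex.continuous_conj.tendsto d).comp (h1.comp h2)
  refine HasDerivAt.differentiableAt (f' := (starRingEnd ℂ) d) ?_
  rw [hasDerivAt_iff_tendsto_slope]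
  refine h3.congr fun z => ?_
  simp only [slope_def_field, map_div₀, map_sub, Complex.conj_conj]

/-- The ε-regularized Phragmén–Lindelöf bound in the first quadrant, for functions bounded
by `K e^{x²/2}` which are bounded by `K` on both coordinate half-axes. -/
lemma quadrant_bound (G : ℂ → ℂ) {K : ℝ} (hd : Differentiable ℂ G)
    (hre : ∀ x : ℝ, ‖G x‖ ≤ K) (him : ∀ y : ℝ, ‖G (y * Complex.I)‖ ≤ K)
    (hgrow : ∀ z : ℂ, ‖G z‖ ≤ K * Real.exp (z.re ^ 2 / 2))
    {z : ℂ} (h1 : 0 ≤ z.re) (h2 : 0 ≤ z.im) : ‖G z‖ ≤ K := by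
  have hK : 0 ≤ K := le_trans (norm_nonneg _) (hre 0)
  rcases eq_or_ne z 0 with rfl | hz0
  · simpa using hre 0
  have key : ∀ ε : ℝ, 0 < ε → ‖G z‖ ≤ K * Real.exp (2 * ε * (z.re * z.im)) := by
    intro ε hε
    set θ := Real.arctan (1 / (4 * ε)) with hθdef
    have hθpos : 0 < θ := by
      rw [hθdef, ← Real.arctan_zero]
      exact Real.arctan_strictMono (by positivity)
    have hθlt : θ < π / 2 := Real.arctan_lt_pi_div_two _
    have hcos : 0 < Real.cos θ := Real.cos_pos_of_mem_Ioo ⟨by linarith [Real.pi_pos], hθlt⟩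
    have hsin : 0 < Real.sin θ := Real.sin_pos_of_pos_of_lt_pi hθpos (by linarith [Real.pi_pos])
    have htan : Real.tan θ = 1 / (4 * ε) := Real.tan_arctan _
    have hkey : Real.cos θ / 2 = 2 * ε * Real.sin θ := by
      have hsq : (0:ℝ) < Real.sqrt (1 + (1 / (4 * ε)) ^ 2) :=
        Real.sqrt_pos.2 (by positivity)
      rw [hθdef, Real.cos_arctan, Real.sin_arctan, div_div]
      have hne : Real.sqrt (1 + (1 / (4 * ε)) ^ 2) ≠ 0 := hsq.ne'
      field_simp
      ring
    set g : ℂ → ℂ := fun w => G w * Complex.exp (Complex.I * ε * w ^ 2) with hg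
    have hmulre : ∀ w : ℂ, (Complex.I * ε * w ^ 2).re = -(2 * ε) * (w.re * w.im) := by
      intro w
      simp [Complex.mul_re, Complex.mul_im, pow_two]
      ring
    have hmul : ∀ w : ℂ, ‖Complex.exp (Complex.I * ε * w ^ 2)‖
        = Real.exp (-(2 * ε) * (w.re * w.im)) := by
      intro w
      rw [Complex.norm_exp, hmulre]
    have hgd : Differentiable ℂ g := by
      exact hd.mul (Differentiable.cexp (by fun_prop))
    have hgrow' : ∀ w : ℂ, ‖g w‖ ≤ K * Real.exp ((1/2 + 2*ε) * ‖w‖ ^ 2) := by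
      intro w
      rw [norm_mul, hmul]
      calc ‖G w‖ * Real.exp (-(2 * ε) * (w.re * w.im))
          ≤ (K * Real.exp (w.re ^ 2 / 2)) * Real.exp (-(2 * ε) * (w.re * w.im)) := by
            gcongr
            exact hgrow w
        _ = K * Real.exp (w.re ^ 2 / 2 + -(2 * ε) * (w.re * w.im)) := by
            rw [mul_assoc, ← Real.exp_add]
        _ ≤ K * Real.exp ((1/2 + 2*ε) * ‖w‖ ^ 2) := by
            gcongr
            have hre2 : w.re ^ 2 ≤ ‖w‖ ^ 2 := by
              rw [← _root_.sq_abs w.re]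
              exact pow_le_pow_left₀ (abs_nonneg _) (Complex.abs_re_le_norm w) 2
            have him2 : -(w.re * w.im) ≤ ‖w‖ ^ 2 := by
              have h1 : |w.re * w.im| ≤ ‖w‖ ^ 2 := by
                rw [abs_mul]
                calc |w.re| * |w.im| ≤ ‖w‖ * ‖w‖ :=
                      mul_le_mul (Complex.abs_re_le_norm w) (Complex.abs_im_le_norm w)
                        (abs_nonneg _) (norm_nonneg _)
                  _ = ‖w‖ ^ 2 := (pow_two _).symm
              nlinarith [neg_abs_le (w.re * w.im)]
            nlinarith
    -- value of g on the ray with angle θ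
    have hray : ∀ r : ℝ, 0 ≤ r → ‖g (r * Complex.exp (θ * Complex.I))‖ ≤ K := by
      intro r hr
      set w : ℂ := r * Complex.exp (θ * Complex.I) with hw
      have hexp : Complex.exp ((θ:ℂ) * Complex.I)
          = ((Real.cos θ : ℝ) : ℂ) + ((Real.sin θ : ℝ) : ℂ) * Complex.I := by
        rw [Complex.exp_mul_I, ← Complex.ofReal_cos, ← Complex.ofReal_sin]
      have hwre : w.re = r * Real.cos θ := by
        rw [hw, hexp]; simp [Complex.cos_ofReal_re, Complex.sin_ofReal_re]
      have hwim : w.im = r * Real.sin θ := by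
        rw [hw, hexp]; simp [Complex.cos_ofReal_re, Complex.sin_ofReal_re]
      rw [norm_mul, hmul]
      calc ‖G w‖ * Real.exp (-(2 * ε) * (w.re * w.im))
          ≤ (K * Real.exp (w.re ^ 2 / 2)) * Real.exp (-(2 * ε) * (w.re * w.im)) := by
            gcongr; exact hgrow w
        _ = K * Real.exp (w.re ^ 2 / 2 + -(2 * ε) * (w.re * w.im)) := by
            rw [mul_assoc, ← Real.exp_add]
        _ = K := by
            rw [hwre, hwim]
            have : (r * Real.cos θ) ^ 2 / 2 + -(2 * ε) * (r * Real.cos θ * (r * Real.sin θ)) =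
                r^2 * Real.cos θ * (Real.cos θ / 2 - 2 * ε * Real.sin θ) := by ring
            rw [this, hkey]
            simp
    have hzarg1 : 0 ≤ z.arg := Complex.arg_nonneg_iff.2 h2
    have hzarg2 : z.arg ≤ π / 2 := Complex.arg_le_pi_div_two_iff.2 (Or.inl h1)
    have hgz : ‖g z‖ ≤ K := by
      rcases le_total z.arg θ with hle | hle
      · refine sector_PL g (a := 0) (b := θ) hθpos (by linarith) hgd hgrow' ?_ ?_ hz0 hzarg1 hle
        · intro r hr
          have h0 : ((r : ℂ) * Complex.exp ((((0:ℝ)):ℂ) * Complex.I)) = (r : ℂ) := by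
            norm_num
          rw [h0]
          simp only [hg]
          rw [norm_mul, hmul]
          have h0' : ((r : ℂ)).re * ((r : ℂ)).im = 0 := by simp
          rw [h0']
          simpa using hre r
        · exact hray
      · refine sector_PL g (a := θ) (b := π/2) hθlt (by linarith) hgd hgrow' hray ?_ hz0 hle hzarg2
        · intro r hr
          have h5 : Complex.exp (((π/2 : ℝ) : ℂ) * Complex.I) = Complex.I := by
            rw [Complex.exp_mul_I, ← Complex.ofReal_cos, ← Complex.ofReal_sin,
              Real.cos_pi_div_two, Real.sin_pi_div_two]
            simp
          rw [h5]
          simp only [hg]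
          rw [norm_mul, hmul]
          have h6 : ((r : ℂ) * Complex.I).re * ((r : ℂ) * Complex.I).im = 0 := by simp
          rw [h6]
          simpa using him r
    have hthis := hgz
    simp only [hg] at hthis
    rw [norm_mul, hmul] at hthis
    calc ‖G z‖ = ‖G z‖ * Real.exp (-(2 * ε) * (z.re * z.im)) * Real.exp (2 * ε * (z.re * z.im)) := by
          rw [mul_assoc, ← Real.exp_add,
            show -(2 * ε) * (z.re * z.im) + 2 * ε * (z.re * z.im) = 0 by ring,
            Real.exp_zero, mul_one]
      _ ≤ K * Real.exp (2 * ε * (z.re * z.im)) :=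
          mul_le_mul_of_nonneg_right hthis (Real.exp_pos _).le
  -- let ε → 0⁺
  have hlim : Filter.Tendsto (fun ε : ℝ => K * Real.exp (2 * ε * (z.re * z.im)))
      (nhdsWithin 0 (Set.Ioi 0)) (nhds (K * Real.exp (2 * 0 * (z.re * z.im)))) := by
    refine Filter.Tendsto.mono_left ?_ nhdsWithin_le_nhds
    exact (Continuous.tendsto (by continuity) 0)
  have : K * Real.exp (2 * 0 * (z.re * z.im)) = K := by simp
  rw [this] at hlim
  refine ge_of_tendsto hlim ?_
  filter_upwards [self_mem_nhdsWithin] with ε hε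
  exact key ε hε

lemma norm_conj' (u : ℂ) : ‖(starRingEnd ℂ) u‖ = ‖u‖ := by
  rw [Complex.norm_conj]

lemma global_bound (G : ℂ → ℂ) {K : ℝ} (hd : Differentiable ℂ G)
    (hre : ∀ x : ℝ, ‖G x‖ ≤ K) (him : ∀ y : ℝ, ‖G (y * Complex.I)‖ ≤ K)
    (hgrow : ∀ z : ℂ, ‖G z‖ ≤ K * Real.exp (z.re ^ 2 / 2)) :
    ∀ z : ℂ, ‖G z‖ ≤ K := by
  intro z
  rcases le_total 0 z.re with hx | hx <;> rcases le_total 0 z.im with hy | hy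
  · exact quadrant_bound G hd hre him hgrow hx hy
  · -- re ≥ 0, im ≤ 0 : reflect by conjugation
    set G2 : ℂ → ℂ := fun w => (starRingEnd ℂ) (G ((starRingEnd ℂ) w)) with hG2
    have h2 : ‖G2 ((starRingEnd ℂ) z)‖ ≤ K := by
      refine quadrant_bound G2 (diff_conj_conj hd) ?_ ?_ ?_ ?_ ?_
      · intro x
        simp only [hG2, Complex.conj_ofReal, norm_conj']
        exact hre x
      · intro y
        have hc : (starRingEnd ℂ) ((y : ℂ) * Complex.I) = ((-y : ℝ) : ℂ) * Complex.I := by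
          simp [Complex.conj_I]
        simp only [hG2, hc, norm_conj']
        exact him (-y)
      · intro w
        simp only [hG2, norm_conj']
        have := hgrow ((starRingEnd ℂ) w)
        simpa using this
      · simpa using hx
      · simpa using hy
    simp only [hG2, Complex.conj_conj, norm_conj'] at h2
    exact h2
  · -- re ≤ 0, im ≥ 0 : reflect by minus-conjugation
    set G3 : ℂ → ℂ := fun w => (starRingEnd ℂ) (G (-(starRingEnd ℂ) w)) with hG3
    have hd3 : Differentiable ℂ G3 := by
      have h0 : Differentiable ℂ fun u : ℂ => G (-u) := hd.comp differentiable_neg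
      exact diff_conj_conj h0
    have h3 : ‖G3 (-(starRingEnd ℂ) z)‖ ≤ K := by
      refine quadrant_bound G3 hd3 ?_ ?_ ?_ ?_ ?_
      · intro x
        have hc : -((starRingEnd ℂ) (x : ℂ)) = ((-x : ℝ) : ℂ) := by
          simp [Complex.conj_ofReal]
        simp only [hG3, hc, norm_conj']
        exact hre (-x)
      · intro y
        have hc : -((starRingEnd ℂ) ((y : ℂ) * Complex.I)) = (y : ℂ) * Complex.I := by
          simp [Complex.conj_I]
        simp only [hG3, hc, norm_conj']
        exact him y
      · intro w
        simp only [hG3, norm_conj']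
        have := hgrow (-((starRingEnd ℂ) w))
        simpa using this
      · simpa using hx
      · simpa using hy
    have hc2 : -((starRingEnd ℂ) (-(starRingEnd ℂ) z)) = z := by
      simp
    rw [hG3] at h3
    simp only [] at h3
    rw [hc2, norm_conj'] at h3
    exact h3
  · -- re ≤ 0, im ≤ 0 : reflect by negation
    set G4 : ℂ → ℂ := fun w => G (-w) with hG4
    have h4 : ‖G4 (-z)‖ ≤ K := by
      refine quadrant_bound G4 (hd.comp differentiable_neg) ?_ ?_ ?_ ?_ ?_
      · intro x
        have hc : -((x : ℂ)) = ((-x : ℝ) : ℂ) := by push_cast; ring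
        simp only [hG4, hc]
        exact hre (-x)
      · intro y
        have hc : -((y : ℂ) * Complex.I) = ((-y : ℝ) : ℂ) * Complex.I := by push_cast; ring
        simp only [hG4, hc]
        exact him (-y)
      · intro w
        simp only [hG4]
        have := hgrow (-w)
        simpa using this
      · simpa using hx
      · simpa using hy
    simpa [hG4] using h4

lemma entire_bounded_const (G : ℂ → ℂ) {K : ℝ} (hd : Differentiable ℂ G)
    (hb : ∀ z : ℂ, ‖G z‖ ≤ K) : ∀ z : ℂ, G z = G 0 := by
  intro z
  refine hd.apply_eq_apply_of_bounded ?_ z 0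
  rw [Metric.isBounded_iff_subset_closedBall 0]
  exact ⟨K, by rintro _ ⟨w, rfl⟩; simpa [Complex.dist_eq] using hb w⟩

/-- Pack a smooth compactly supported function as a Schwartz function. -/
noncomputable def toSchwartz (φ : ℝ → ℂ) (h1 : ContDiff ℝ ((⊤ : ℕ∞) : WithTop ℕ∞) φ) (h2 : HasCompactSupport φ) :
    SchwartzMap ℝ ℂ where
  toFun := φ
  smooth' := h1
  decay' := by
    intro k n
    have hcont : Continuous fun x : ℝ => ‖x‖ ^ k * ‖iteratedFDeriv ℝ n φ x‖ :=
      (continuous_norm.pow k).mul (h1.continuous_iteratedFDeriv (by exact_mod_cast le_top)).norm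
    have hsupp : HasCompactSupport fun x : ℝ => ‖x‖ ^ k * ‖iteratedFDeriv ℝ n φ x‖ := by
      have h3 : HasCompactSupport fun x : ℝ => ‖iteratedFDeriv ℝ n φ x‖ :=
        (h2.iteratedFDeriv n).comp_left (g := norm) norm_zero
      exact HasCompactSupport.mul_left h3
    obtain ⟨Cb, hCb⟩ := hcont.bounded_above_of_compact_support hsupp
    refine ⟨Cb, fun x => ?_⟩
    have h5 := hCb x
    rw [Real.norm_of_nonneg (by positivity)] at h5
    simpa [Real.norm_eq_abs] using h5

@[simp] lemma toSchwartz_coe (φ : ℝ → ℂ) (h1 : ContDiff ℝ ((⊤ : ℕ∞) : WithTop ℕ∞) φ) (h2 : HasCompactSupport φ) :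
    ⇑(toSchwartz φ h1 h2) = φ := rfl

/-- A function in `L¹` whose Fourier transform vanishes is a.e. zero. -/
lemma test_zero {h : ℝ → ℂ} (hint : Integrable h)
    (hft : ∀ w : ℝ, 𝓕 h w = 0) : ∀ᵐ x : ℝ, h x = 0 := by
  refine ae_eq_zero_of_integral_contDiff_smul_eq_zero hint.locallyIntegrable ?_
  intro g g_diff g_supp
  set φ : ℝ → ℂ := fun x => (g x : ℂ) with hφ
  have φ_diff : ContDiff ℝ ((⊤ : ℕ∞) : WithTop ℕ∞) φ := Complex.ofRealCLM.contDiff.comp g_diff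
  have φ_supp : HasCompactSupport φ :=
    g_supp.comp_left (g := fun r : ℝ => (r : ℂ)) Complex.ofReal_zero
  set φS : SchwartzMap ℝ ℂ := toSchwartz φ φ_diff φ_supp with hφS
  set ψS : SchwartzMap ℝ ℂ := (FourierTransform.fourierCLE ℂ (SchwartzMap ℝ ℂ)).symm φS with hψS
  have hψ : 𝓕 (⇑ψS) = ⇑φS := by
    have h4 := (FourierTransform.fourierCLE ℂ (SchwartzMap ℝ ℂ)).apply_symm_apply φS
    calc 𝓕 (⇑ψS) = ⇑(FourierTransform.fourierCLE ℂ (SchwartzMap ℝ ℂ) ψS) := by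
          rw [FourierTransform.fourierCLE_apply, SchwartzMap.fourier_coe]
      _ = ⇑φS := by rw [h4]
  have hflip : (innerₗ ℝ).flip = innerₗ ℝ := by
    apply LinearMap.ext; intro v; apply LinearMap.ext; intro w
    simpa using real_inner_comm w v
  have key := VectorFourier.integral_fourierIntegral_smul_eq_flip (L := innerₗ ℝ)
    (μ := (volume : Measure ℝ)) (ν := (volume : Measure ℝ)) Real.continuous_fourierChar continuous_inner
    ψS.integrable hint
  rw [hflip] at key
  have hL : (VectorFourier.fourierIntegral 𝐞 volume (innerₗ ℝ) ⇑ψS) = 𝓕 (⇑ψS) := rfl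
  have hR : (VectorFourier.fourierIntegral 𝐞 volume (innerₗ ℝ) h) = 𝓕 h := rfl
  rw [hL, hR, hψ] at key
  have hzero : ∫ ξ : ℝ, (φS : ℝ → ℂ) ξ • h ξ = 0 := by
    rw [key]
    have : ∀ x : ℝ, (ψS : ℝ → ℂ) x • 𝓕 h x = 0 := by
      intro x; rw [hft x, smul_zero]
    simp only [this, integral_zero]
  have hpt : (fun x : ℝ => g x • h x) = fun ξ : ℝ => (φS : ℝ → ℂ) ξ • h ξ := by
    funext x
    simp only [hφS, toSchwartz_coe, hφ]
    rw [Complex.real_smul, smul_eq_mul]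
  calc ∫ x : ℝ, g x • h x = ∫ ξ : ℝ, (φS : ℝ → ℂ) ξ • h ξ := by rw [hpt]
    _ = 0 := hzero

lemma gauss_integrable : Integrable (fun x : ℝ => Complex.exp (-(x:ℂ)^2/2)) := by
  refine (int_gauss 0).mono' ?_ ?_
  · exact (Complex.continuous_exp.comp (by continuity)).aestronglyMeasurable
  · filter_upwards with t
    have h6 : -((t:ℂ))^2/2 = ((-(t^2)/2 : ℝ) : ℂ) := by push_cast; ring
    rw [h6, Complex.norm_exp, Complex.ofReal_re]
    simp

lemma Fc_gauss (z : ℂ) :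
    Fc (fun x : ℝ => Complex.exp (-(x:ℂ)^2/2)) z
      = (Real.sqrt (2*Real.pi) : ℂ) * Complex.exp (-(z^2/2)) := by
  have hb : (0:ℝ) < ((1/2 : ℂ)).re := by norm_num
  have hgauss := fourierIntegral_gaussian hb (-z)
  rw [Fc]
  have hleft : (∫ t : ℝ, (fun x : ℝ => Complex.exp (-(x:ℂ)^2/2)) t * Complex.exp (-Complex.I * t * z))
      = ∫ x : ℝ, Complex.exp (Complex.I * (-z) * x) * Complex.exp (-(1/2:ℂ) * x ^ 2) := by
    congr 1; funext t
    rw [mul_comm]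
    congr 1 <;> ring_nf
  rw [hleft, hgauss]
  congr 1
  · have h1 : ((Real.pi : ℂ) / (1/2 : ℂ)) = (((2*Real.pi : ℝ)) : ℂ) := by push_cast; ring
    rw [h1]
    have h2 : ((1:ℂ)/2) = (((1/2 : ℝ)) : ℂ) := by push_cast; ring
    rw [h2, ← Complex.ofReal_cpow (by positivity)]
    rw [Real.sqrt_eq_rpow]
  · congr 1; ring


/-- Hardy's theorem, little-o version: if `f` and `f̂` are `O(e^{-x²/2})` and moreover
`f` is `o(e^{-x²/2})` as `|x| → ∞`, then `f = 0`. -/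
theorem hardy_uncertainty_little_o (f : ℝ → ℂ) (C : ℝ) (hC : 0 < C)
    (hmeas : Measurable f)
    (hf : ∀ x : ℝ, ‖f x‖ ≤ C * Real.exp (-x ^ 2 / 2))
    (hft : ∀ ξ : ℝ, ‖ft f ξ‖ ≤ C * Real.exp (-ξ ^ 2 / 2))
    (hlittle : Tendsto (fun x : ℝ => ‖f x‖ * Real.exp (x ^ 2 / 2)) (cocompact ℝ) (nhds 0)) :
    ∀ᵐ x : ℝ, f x = 0 := by
  have hsq : 0 < Real.sqrt (2 * Real.pi) := Real.sqrt_pos.2 (by positivity)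
  set K : ℝ := C * Real.sqrt (2 * Real.pi) with hK
  have hfint : Integrable f := f_integrable hmeas hf
  set G : ℂ → ℂ := fun z => Fc f z * Complex.exp (z ^ 2 / 2) with hG
  have hFd : Differentiable ℂ (Fc f) := Fc_differentiable hC hmeas hf
  have hGd : Differentiable ℂ G := hFd.mul (Differentiable.cexp (by fun_prop))
  -- Fc on the real axis in terms of ft
  have hFre : ∀ ξ : ℝ, Fc f (ξ : ℂ) = ((Real.sqrt (2 * Real.pi) : ℝ) : ℂ) * ft f ξ := by
    intro ξ
    rw [ft, ← mul_assoc, ← Complex.ofReal_mul, mul_inv_cancel₀ hsq.ne', Complex.ofReal_one,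
      one_mul]
    rfl
  have hFre_le : ∀ ξ : ℝ, ‖Fc f (ξ : ℂ)‖ ≤ K * Real.exp (-ξ ^ 2 / 2) := by
    intro ξ
    rw [hFre ξ, norm_mul, Complex.norm_real, Real.norm_of_nonneg hsq.le]
    calc Real.sqrt (2 * Real.pi) * ‖ft f ξ‖
        ≤ Real.sqrt (2 * Real.pi) * (C * Real.exp (-ξ ^ 2 / 2)) := by gcongr; exact hft ξ
      _ = K * Real.exp (-ξ ^ 2 / 2) := by rw [hK]; ring
  -- bounds for G
  have hGre : ∀ x : ℝ, ‖G (x : ℂ)‖ ≤ K := by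
    intro x
    simp only [hG]
    rw [norm_mul]
    have h1 : ‖Complex.exp ((x : ℂ) ^ 2 / 2)‖ = Real.exp (x ^ 2 / 2) := by
      have h2 : ((x : ℂ) ^ 2 / 2) = ((x ^ 2 / 2 : ℝ) : ℂ) := by push_cast; ring
      rw [h2, Complex.norm_exp, Complex.ofReal_re]
    rw [h1]
    calc ‖Fc f (x : ℂ)‖ * Real.exp (x ^ 2 / 2)
        ≤ (K * Real.exp (-x ^ 2 / 2)) * Real.exp (x ^ 2 / 2) := by
          gcongr; exact hFre_le x
      _ = K := by
          rw [mul_assoc, ← Real.exp_add, show -x^2/2 + x^2/2 = 0 by ring, Real.exp_zero, mul_one]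
  have hGim : ∀ y : ℝ, ‖G ((y : ℂ) * Complex.I)‖ ≤ K := by
    intro y
    simp only [hG]
    rw [norm_mul]
    have h1 : ‖Complex.exp (((y : ℂ) * Complex.I) ^ 2 / 2)‖ = Real.exp (-y ^ 2 / 2) := by
      have h2 : (((y : ℂ) * Complex.I) ^ 2 / 2) = ((-y ^ 2 / 2 : ℝ) : ℂ) := by
        rw [mul_pow, Complex.I_sq]
        push_cast
        ring
      rw [h2, Complex.norm_exp, Complex.ofReal_re]
    rw [h1]
    have h3 : ‖Fc f ((y : ℂ) * Complex.I)‖ ≤ K * Real.exp (y ^ 2 / 2) := by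
      have h4 := Fc_le hmeas hf ((y : ℂ) * Complex.I)
      rw [show ((y : ℂ) * Complex.I).im = y by simp] at h4
      exact h4
    calc ‖Fc f ((y : ℂ) * Complex.I)‖ * Real.exp (-y ^ 2 / 2)
        ≤ (K * Real.exp (y ^ 2 / 2)) * Real.exp (-y ^ 2 / 2) := by gcongr
      _ = K := by
          rw [mul_assoc, ← Real.exp_add, show y^2/2 + -y^2/2 = 0 by ring, Real.exp_zero, mul_one]
  have hGgrow : ∀ z : ℂ, ‖G z‖ ≤ K * Real.exp (z.re ^ 2 / 2) := by
    intro z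
    simp only [hG]
    rw [norm_mul]
    have h1 : ‖Complex.exp (z ^ 2 / 2)‖ = Real.exp ((z.re ^ 2 - z.im ^ 2) / 2) := by
      rw [Complex.norm_exp]
      congr 1
      rw [show (2:ℂ) = ((2:ℝ):ℂ) by norm_num, Complex.div_ofReal_re, pow_two, Complex.mul_re]
      ring
    rw [h1]
    calc ‖Fc f z‖ * Real.exp ((z.re ^ 2 - z.im ^ 2) / 2)
        ≤ (K * Real.exp (z.im ^ 2 / 2)) * Real.exp ((z.re ^ 2 - z.im ^ 2) / 2) := by
          gcongr; exact Fc_le hmeas hf z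
      _ = K * Real.exp (z.re ^ 2 / 2) := by
          rw [mul_assoc, ← Real.exp_add]
          congr 2
          ring
  -- Liouville
  have hGb := global_bound G hGd hGre hGim hGgrow
  have hGc := entire_bounded_const G hGd hGb
  have hFz : ∀ z : ℂ, Fc f z = Fc f 0 * Complex.exp (-(z ^ 2 / 2)) := by
    intro z
    have h3 := hGc z
    simp only [hG] at h3
    norm_num at h3
    calc Fc f z = Fc f z * Complex.exp (z ^ 2 / 2) * Complex.exp (-(z ^ 2 / 2)) := by
          rw [mul_assoc, ← Complex.exp_add, add_neg_cancel, Complex.exp_zero, mul_one]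
      _ = Fc f 0 * Complex.exp (-(z ^ 2 / 2)) := by rw [h3]
  -- the candidate Gaussian
  set c1 : ℂ := Fc f 0 / ((Real.sqrt (2 * Real.pi) : ℝ) : ℂ) with hc1
  set gau : ℝ → ℂ := fun x => c1 * Complex.exp (-((x : ℂ)) ^ 2 / 2) with hgau
  have hgau_norm : ∀ x : ℝ, ‖gau x‖ = ‖c1‖ * Real.exp (-x ^ 2 / 2) := by
    intro x
    simp only [hgau]
    have h2 : (-((x : ℂ)) ^ 2 / 2) = ((-x ^ 2 / 2 : ℝ) : ℂ) := by push_cast; ring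
    rw [norm_mul, h2]
    rw [Complex.norm_exp, Complex.ofReal_re]
  have hgau_int : Integrable gau := gauss_integrable.const_mul c1
  have hgau_meas : Measurable gau := by
    have hcont : Continuous fun x : ℝ => -((x : ℂ)) ^ 2 / 2 := by fun_prop
    exact ((Complex.continuous_exp.comp hcont).measurable).const_mul c1
  have hgau_bound : ∀ x : ℝ, ‖gau x‖ ≤ (‖c1‖ + 1) * Real.exp (-x ^ 2 / 2) := by
    intro x
    rw [hgau_norm x]
    gcongr
    linarith
  have hFgau : ∀ z : ℂ, Fc gau z = Fc f 0 * Complex.exp (-(z ^ 2 / 2)) := by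
    intro z
    have h5 : Fc gau z = c1 * Fc (fun x : ℝ => Complex.exp (-(x:ℂ)^2/2)) z := by
      rw [Fc, Fc, ← integral_const_mul]
      congr 1
      funext t
      simp only [hgau]
      ring_nf
    have h6 : ((Real.sqrt (2 * Real.pi) : ℝ) : ℂ) ≠ 0 := by
      exact_mod_cast hsq.ne'
    rw [h5, Fc_gauss z, hc1]
    calc Fc f 0 / ((Real.sqrt (2 * Real.pi) : ℝ) : ℂ)
          * (((Real.sqrt (2 * Real.pi) : ℝ) : ℂ) * Complex.exp (-(z ^ 2 / 2)))
        = Fc f 0 * Complex.exp (-(z ^ 2 / 2))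
          * ((((Real.sqrt (2 * Real.pi) : ℝ) : ℂ))⁻¹ * ((Real.sqrt (2 * Real.pi) : ℝ) : ℂ)) := by
          ring
      _ = Fc f 0 * Complex.exp (-(z ^ 2 / 2)) := by
          rw [inv_mul_cancel₀ h6, mul_one]
  -- the difference has vanishing Fourier transform
  set h : ℝ → ℂ := fun x => f x - gau x with hh
  have h_int : Integrable h := hfint.sub hgau_int
  have hFh : ∀ z : ℂ, Fc h z = 0 := by
    intro z
    have h7 : Fc h z = Fc f z - Fc gau z := by
      rw [Fc, Fc, Fc, ← integral_sub (integrand_integrable hmeas hf z)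
        (integrand_integrable hgau_meas hgau_bound z)]
      congr 1
      funext t
      simp only [hh]
      ring
    rw [h7, hFz z, hFgau z, sub_self]
  have hft0 : ∀ w : ℝ, 𝓕 h w = 0 := by
    intro w
    rw [Real.fourier_real_eq]
    have h8 : (∫ v : ℝ, 𝐞 (-(v * w)) • h v) = Fc h ((2 * Real.pi * w : ℝ) : ℂ) := by
      rw [Fc]
      congr 1
      funext v
      rw [Circle.smul_def, Real.fourierChar_apply, smul_eq_mul, mul_comm]
      congr 2
      push_cast
      ring
    rw [h8, hFh]
  have hae : ∀ᵐ x : ℝ, h x = 0 := test_zero h_int hft0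
  -- kill the constant using the little-o hypothesis
  rcases eq_or_ne c1 0 with hc0 | hc0
  · filter_upwards [hae] with x hx
    have : gau x = 0 := by simp [hgau, hc0]
    simpa [hh, this, sub_eq_zero] using hx
  · exfalso
    have h5 : ∀ᶠ x in cocompact ℝ, ‖f x‖ * Real.exp (x ^ 2 / 2) < ‖c1‖ / 2 := by
      have h6 := Metric.tendsto_nhds.mp hlittle (‖c1‖ / 2) (half_pos (norm_pos_iff.2 hc0))
      filter_upwards [h6] with x hx
      rw [Real.dist_eq, sub_zero] at hx
      exact lt_of_le_of_lt (le_abs_self _) hx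
    rw [Filter.eventually_iff, mem_cocompact] at h5
    obtain ⟨Kc, hKc1, hKc2⟩ := h5
    obtain ⟨R, hR⟩ := hKc1.isBounded.subset_closedBall 0
    have hvol : volume ({x : ℝ | h x = 0}ᶜ) = 0 := by
      rw [ae_iff] at hae
      exact hae
    have hne : (Set.Ioi (max R 0) ∩ {x : ℝ | h x = 0}).Nonempty := by
      by_contra hcon
      rw [Set.not_nonempty_iff_eq_empty] at hcon
      have hsub : Set.Ioi (max R 0) ⊆ {x : ℝ | h x = 0}ᶜ := by
        intro x hx hx2
        exact Set.eq_empty_iff_forall_notMem.1 hcon x ⟨hx, hx2⟩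
      have := measure_mono_null hsub hvol
      rw [Real.volume_Ioi] at this
      simpa using this
    obtain ⟨x, hx1, hx2⟩ := hne
    have hx3 : x ∉ Kc := by
      intro hmem
      have h9 := hR hmem
      rw [Metric.mem_closedBall, Real.dist_eq, sub_zero] at h9
      have : x ≤ R := le_trans (le_abs_self x) h9
      have : max R 0 < x := hx1
      have : R < x := lt_of_le_of_lt (le_max_left R 0) hx1
      linarith
    have hx4 := hKc2 hx3
    simp only [Set.mem_setOf_eq] at hx4
    have hfx : f x = gau x := by
      have : h x = 0 := hx2
      simpa [hh, sub_eq_zero] using this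
    rw [hfx] at hx4
    rw [hgau_norm x, mul_assoc, ← Real.exp_add, show -x^2/2 + x^2/2 = 0 by ring,
      Real.exp_zero, mul_one] at hx4
    have : 0 < ‖c1‖ := norm_pos_iff.2 hc0
    linarith
end

section
/- Let H be a Hilbert space, S symmetric, A skew-symmetric (both time-independent), and v : [0,1] → H a smooth solution of ∂_t v = (S + A)v with v(t) ≠ 0. Set H(t) = ⟨v(t), v(t)⟩. If ⟨(SA − AS)w, w⟩ ≥ 0 for all w in the relevant domain, then log H(t) is convex on [0,1]; in particular H(t) ≤ H(0)^{1−t} H(1)^t for all t ∈ [0,1]. -/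
/-- Agmon–Nirenberg logarithmic convexity: if `∂_t v = (S + A)v` with `S` symmetric,
`A` skew-symmetric and nonnegative commutator `SA − AS`, then `log ‖v(t)‖²` is convex
on `[0,1]` and `H(t) ≤ H(0)^{1−t} H(1)^t` for `H(t) = ‖v(t)‖²`. -/
theorem agmon_nirenberg_log_convexity
    {H : Type*} [NormedAddCommGroup H] [InnerProductSpace ℂ H] [CompleteSpace H]
    (S A : H →ₗ[ℂ] H)
    (hS : ∀ x y : H, inner ℂ (S x) y = (inner ℂ x (S y) : ℂ))
    (hA : ∀ x y : H, inner ℂ (A x) y = -(inner ℂ x (A y) : ℂ))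
    (hcomm : ∀ w : H, 0 ≤ (inner ℂ (S (A w) - A (S w)) w : ℂ).re)
    (v : ℝ → H) (hv : ∀ t : ℝ, HasDerivAt v (S (v t) + A (v t)) t)
    (hne : ∀ t : ℝ, v t ≠ 0) :
    ConvexOn ℝ (Set.Icc (0 : ℝ) 1) (fun t => Real.log (‖v t‖ ^ 2)) ∧
      ∀ t ∈ Set.Icc (0 : ℝ) 1,
        ‖v t‖ ^ 2 ≤ Real.rpow (‖v 0‖ ^ 2) (1 - t) * Real.rpow (‖v 1‖ ^ 2) t := by
  -- `S` is symmetric hence continuous (Hellinger–Toeplitz)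
  have hSsym : S.IsSymmetric := hS
  have hScont : Continuous S := hSsym.continuous
  -- `I • A` is symmetric, hence `A` is continuous
  have hBsym : (Complex.I • A).IsSymmetric := by
    intro x y
    simp only [LinearMap.smul_apply, inner_smul_left, inner_smul_right, hA x y,
      Complex.conj_I]
    ring
  have hAcont : Continuous A := by
    have hB : Continuous (Complex.I • A) := hBsym.continuous
    have : Continuous fun x => (-Complex.I) • (Complex.I • A) x :=
      (continuous_const_smul _).comp hB
    simpa [smul_smul, Complex.I_mul_I] using this
  set Sc : H →L[ℂ] H := ⟨S, hScont⟩ with hSc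
  -- symmetry of real parts of inner ℂ products
  have hresymm : ∀ x y : H, ((inner ℂ x y : ℂ)).re = ((inner ℂ y x : ℂ)).re := by
    intro x y
    rw [← inner_conj_symm x y]
    exact Complex.conj_re _
  -- basic real-part facts
  have hReAv : ∀ w : H, (inner ℂ w (A w) : ℂ).re = 0 := by
    intro w
    have h1 : (inner ℂ (A w) w : ℂ) = -(inner ℂ w (A w) : ℂ) := hA w w
    have := congrArg Complex.re h1
    rw [hresymm (A w) w, Complex.neg_re] at this
    linarith
  have hReSA : ∀ w : H, 0 ≤ (inner ℂ (S w) (A w) : ℂ).re := by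
    intro w
    have h := hcomm w
    rw [inner_sub_left, hS (A w) w, hA (S w) w] at h
    simp only [Complex.add_re, Complex.sub_re, Complex.neg_re, sub_neg_eq_add,
      hresymm (A w) (S w)] at h
    linarith
  -- the key functions
  set g : ℝ → ℝ := fun t => ‖v t‖ ^ 2 with hgdef
  set d : ℝ → ℝ := fun t => 2 * (inner ℂ (v t) (S (v t)) : ℂ).re with hddef
  set e : ℝ → ℝ := fun t => 4 * ‖S (v t)‖ ^ 2 + 4 * (inner ℂ (S (v t)) (A (v t)) : ℂ).re
    with hedef
  have hgpos : ∀ t, 0 < g t := fun t => by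
    have h0 : (0:ℝ) < ‖v t‖ := norm_pos_iff.mpr (hne t)
    rw [hgdef]
    positivity
  have hgne : ∀ t, g t ≠ 0 := fun t => (hgpos t).ne'
  -- derivative of g
  have hg' : ∀ t, HasDerivAt g (d t) t := by
    intro t
    have h1 : HasDerivAt (fun t => (inner ℂ (v t) (v t) : ℂ))
        ((inner ℂ (v t) (S (v t) + A (v t)) : ℂ) + (inner ℂ (S (v t) + A (v t)) (v t) : ℂ)) t :=
      (hv t).inner ℂ (hv t)
    have h2 := Complex.reCLM.hasFDerivAt.comp_hasDerivAt t h1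
    have heq : (⇑Complex.reCLM ∘ fun t => (inner ℂ (v t) (v t) : ℂ)) = g := by
      funext s
      rw [hgdef]
      exact inner_self_eq_norm_sq (𝕜 := ℂ) (v s)
    rw [heq] at h2
    simp only [Complex.reCLM_apply] at h2
    refine h2.congr_deriv ?_
    rw [hddef]
    simp only [Complex.add_re, hresymm (S (v t) + A (v t)) (v t), inner_add_right,
      Complex.add_re, hReAv]
    ring
  -- derivative of d
  have hd' : ∀ t, HasDerivAt d (e t) t := by
    intro t
    have hSv : HasDerivAt (fun t => Sc (v t)) (Sc (S (v t) + A (v t))) t := by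
      have := ((Sc.restrictScalars ℝ).hasFDerivAt (x := v t)).comp_hasDerivAt t (hv t)
      simpa [Function.comp_def] using this
    have h1 : HasDerivAt (fun t => (inner ℂ (v t) (Sc (v t)) : ℂ))
        ((inner ℂ (v t) (Sc (S (v t) + A (v t))) : ℂ)
          + (inner ℂ (S (v t) + A (v t)) (Sc (v t)) : ℂ)) t :=
      (hv t).inner ℂ hSv
    have h2 := Complex.reCLM.hasFDerivAt.comp_hasDerivAt t h1
    have h3 := h2.const_mul (2 : ℝ)
    have heq : (fun s => 2 * (⇑Complex.reCLM ∘ fun t => (inner ℂ (v t) (Sc (v t)) : ℂ)) s) = d := by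
      funext s
      simp only [hddef, Function.comp_apply, Complex.reCLM_apply]
      rfl
    rw [heq] at h3
    simp only [Complex.reCLM_apply] at h3
    refine h3.congr_deriv ?_
    have hScApp : ∀ x : H, Sc x = S x := fun _ => rfl
    have k1 : (inner ℂ (v t) (S (S (v t))) : ℂ) = inner ℂ (S (v t)) (S (v t)) :=
      (hS (v t) (S (v t))).symm
    have k2 : (inner ℂ (v t) (S (A (v t))) : ℂ) = inner ℂ (S (v t)) (A (v t)) :=
      (hS (v t) (A (v t))).symm
    have k4 : ((inner ℂ (S (v t)) (S (v t)) : ℂ)).re = ‖S (v t)‖ ^ 2 :=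
      inner_self_eq_norm_sq (𝕜 := ℂ) (S (v t))
    rw [hedef]
    simp only [hScApp, map_add, inner_add_right, inner_add_left, Complex.add_re,
      k1, k2, hresymm (A (v t)) (S (v t)), k4]
    ring
  -- the key pointwise inequality (Cauchy–Schwarz + nonnegative commutator)
  have key : ∀ t, 0 ≤ (e t * g t - d t * d t) / g t ^ 2 := by
    intro t
    apply div_nonneg _ (sq_nonneg _)
    have cs : |(inner ℂ (v t) (S (v t)) : ℂ).re| ≤ ‖v t‖ * ‖S (v t)‖ :=
      le_trans (Complex.abs_re_le_norm _)
        (by exact norm_inner_le_norm _ _)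
    have hre := hReSA (v t)
    have h1 : ((inner ℂ (v t) (S (v t)) : ℂ).re) ^ 2 ≤ (‖v t‖ * ‖S (v t)‖) ^ 2 := by
      rw [← sq_abs]
      exact pow_le_pow_left₀ (abs_nonneg _) cs 2
    have hnn : (0:ℝ) ≤ ‖v t‖ ^ 2 := sq_nonneg _
    simp only [hddef, hedef, hgdef]
    have hmul : (0:ℝ) ≤ (inner ℂ (S (v t)) (A (v t)) : ℂ).re * ‖v t‖ ^ 2 :=
      mul_nonneg hre hnn
    nlinarith [h1, hmul]
  -- first and second derivatives of log g
  have hf' : ∀ t, HasDerivAt (fun t => Real.log (g t)) (d t / g t) t := by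
    intro t
    have := (Real.hasDerivAt_log (hgne t)).comp t (hg' t)
    simpa [Function.comp_def, div_eq_inv_mul] using this
  have hf'' : ∀ t, HasDerivAt (fun t => d t / g t)
      ((e t * g t - d t * d t) / g t ^ 2) t := fun t => (hd' t).div (hg' t) (hgne t)
  -- convexity
  have hconv : ConvexOn ℝ (Set.Icc (0:ℝ) 1) (fun t => Real.log (g t)) := by
    apply convexOn_of_hasDerivWithinAt2_nonneg (convex_Icc 0 1)
      (f' := fun t => d t / g t) (f'' := fun t => (e t * g t - d t * d t) / g t ^ 2)
    · exact fun t _ => ((hf' t).continuousAt).continuousWithinAt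
    · exact fun x _ => (hf' x).hasDerivWithinAt
    · exact fun x _ => (hf'' x).hasDerivWithinAt
    · exact fun x _ => key x
  refine ⟨hconv, ?_⟩
  intro t ht
  obtain ⟨ht0, ht1⟩ := ht
  have hc := hconv.2 (Set.left_mem_Icc.mpr zero_le_one) (Set.right_mem_Icc.mpr zero_le_one)
    (by linarith : (0:ℝ) ≤ 1 - t) ht0 (by ring)
  have hct : (1 - t) • (0:ℝ) + t • (1:ℝ) = t := by simp
  rw [hct] at hc
  have hlog : Real.log (g t) ≤ (1 - t) * Real.log (g 0) + t * Real.log (g 1) := by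
    simpa using hc
  calc g t = Real.exp (Real.log (g t)) := (Real.exp_log (hgpos t)).symm
    _ ≤ Real.exp ((1 - t) * Real.log (g 0) + t * Real.log (g 1)) :=
        Real.exp_le_exp.mpr hlog
    _ = Real.rpow (g 0) (1 - t) * Real.rpow (g 1) t := by
        rw [show Real.rpow (g 0) (1 - t) = g 0 ^ (1 - t) from rfl,
          show Real.rpow (g 1) t = g 1 ^ t from rfl,
          Real.exp_add, Real.rpow_def_of_pos (hgpos 0), Real.rpow_def_of_pos (hgpos 1),
          mul_comm (Real.log (g 0)), mul_comm (Real.log (g 1))]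
end

section
/- Under the hypotheses of the log-convexity lemma, if instead 2⟨(SA − AS)v(t), v(t)⟩ ≥ ψ(t)⟨v(t), v(t)⟩ for a continuous function ψ, then H(t) e^{-B(t)} ≤ H(0)^{1−t} H(1)^t, where B solves B'' = ψ on [0,1] with B(0) = B(1) = 0. -/
private lemma hasDerivAt_re_inner' {H : Type*} [NormedAddCommGroup H] [InnerProductSpace ℂ H]
    {f g : ℝ → H} {f' g' : H} {t : ℝ}
    (hf : HasDerivAt f f' t) (hg : HasDerivAt g g' t) :
    HasDerivAt (fun s => (inner ℂ (f s) (g s) : ℂ).re)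
      ((inner ℂ (f t) g' : ℂ).re + (inner ℂ f' (g t) : ℂ).re) t := by
  have := Complex.reCLM.hasFDerivAt.comp_hasDerivAt t (hf.inner ℂ hg)
  exact this

/-- Weighted logarithmic convexity: if `∂_t v = (S + A)v` with `S` symmetric, `A`
skew-symmetric, and `2⟨(SA − AS)v(t), v(t)⟩ ≥ ψ(t)‖v(t)‖²`, then
`H(t) e^{-B(t)} ≤ H(0)^{1−t} H(1)^t` where `B'' = ψ`, `B(0) = B(1) = 0`. -/
theorem weighted_log_convexity
    {H : Type*} [NormedAddCommGroup H] [InnerProductSpace ℂ H] [CompleteSpace H]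
    (S A : H →ₗ[ℂ] H)
    (hS : ∀ x y : H, inner ℂ (S x) y = (inner ℂ x (S y) : ℂ))
    (hA : ∀ x y : H, inner ℂ (A x) y = -(inner ℂ x (A y) : ℂ))
    (v : ℝ → H) (hv : ∀ t : ℝ, HasDerivAt v (S (v t) + A (v t)) t)
    (hne : ∀ t : ℝ, v t ≠ 0)
    (ψ : ℝ → ℝ) (hψ : Continuous ψ)
    (hcomm : ∀ t : ℝ, ψ t * ‖v t‖ ^ 2 ≤ 2 * (inner ℂ (S (A (v t)) - A (S (v t))) (v t) : ℂ).re)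
    (B B' : ℝ → ℝ) (hB : ∀ t : ℝ, HasDerivAt B (B' t) t)
    (hB' : ∀ t : ℝ, HasDerivAt B' (ψ t) t)
    (hB0 : B 0 = 0) (hB1 : B 1 = 0) :
    ∀ t ∈ Set.Icc (0 : ℝ) 1,
      ‖v t‖ ^ 2 * Real.exp (-B t) ≤
        Real.rpow (‖v 0‖ ^ 2) (1 - t) * Real.rpow (‖v 1‖ ^ 2) t := by
  -- continuity of S (Hellinger–Toeplitz)
  have hSsym : S.IsSymmetric := fun x y => hS x y
  have hScont : Continuous S := hSsym.continuous
  set Sc : H →L[ℂ] H := ⟨S, hScont⟩ with hSc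
  -- basic real-part facts
  have hresymm : ∀ x y : H, (inner ℂ x y : ℂ).re = (inner ℂ y x : ℂ).re := fun x y => by
    simpa using inner_re_symm (𝕜 := ℂ) x y
  have hself : ∀ x : H, (inner ℂ x x : ℂ).re = ‖x‖ ^ 2 := fun x => by
    simpa using inner_self_eq_norm_sq (𝕜 := ℂ) x
  have hAre : ∀ x : H, (inner ℂ (A x) x : ℂ).re = 0 := by
    intro x
    have h1 := hresymm (A x) x
    have h2 := congrArg Complex.re (hA x x)
    simp only [Complex.neg_re] at h2
    linarith
  set g : ℝ → ℝ := fun t => ‖v t‖ ^ 2 with hg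
  set g' : ℝ → ℝ := fun t => 2 * (inner ℂ (S (v t)) (v t) : ℂ).re with hg'
  set g'' : ℝ → ℝ := fun t =>
    4 * ‖S (v t)‖ ^ 2 + 2 * (inner ℂ (S (A (v t)) - A (S (v t))) (v t) : ℂ).re with hg''
  have hpos : ∀ t, 0 < g t := fun t => by
    simpa [hg] using pow_pos (norm_pos_iff.mpr (hne t)) 2
  -- first derivative of g
  have hder1 : ∀ t, HasDerivAt g (g' t) t := by
    intro t
    have hre := hasDerivAt_re_inner' (hv t) (hv t)
    have heq : (fun s => (inner ℂ (v s) (v s) : ℂ).re) = g := by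
      funext s; exact hself (v s)
    rw [heq] at hre
    convert hre using 1
    have e1 := hresymm (v t) (S (v t))
    have e2 := hresymm (v t) (A (v t))
    have e3 := hAre (v t)
    simp only [hg', inner_add_left, inner_add_right, Complex.add_re]
    linarith
  -- second derivative of g
  have hder2 : ∀ t, HasDerivAt g' (g'' t) t := by
    intro t
    have hSv : HasDerivAt (fun s => S (v s)) (S (S (v t) + A (v t))) t :=
      (Sc.restrictScalars ℝ).hasFDerivAt.comp_hasDerivAt t (hv t)
    have hre := (hasDerivAt_re_inner' hSv (hv t)).const_mul 2
    refine hre.congr_deriv ?_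
    have e1 := hself (S (v t))
    have e2 : (inner ℂ (S (S (v t))) (v t) : ℂ).re = ‖S (v t)‖ ^ 2 := by
      rw [hS (S (v t)) (v t)]; exact hself (S (v t))
    have e3 : (inner ℂ (S (v t)) (A (v t)) : ℂ).re = -(inner ℂ (A (S (v t))) (v t) : ℂ).re := by
      have f1 := hresymm (S (v t)) (A (v t))
      have f2 := congrArg Complex.re (hA (v t) (S (v t)))
      simp only [Complex.neg_re] at f2
      have f3 := hresymm (v t) (A (S (v t)))
      linarith
    simp only [hg'', map_add, inner_add_left, inner_add_right, inner_sub_left,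
      Complex.add_re, Complex.sub_re]
    linarith
  -- F = log g - B and its derivatives
  set F : ℝ → ℝ := fun t => Real.log (g t) - B t with hF
  set F' : ℝ → ℝ := fun t => g' t / g t - B' t with hF'
  set F'' : ℝ → ℝ := fun t => (g'' t * g t - g' t * g' t) / g t ^ 2 - ψ t with hF''
  have hFder : ∀ t, HasDerivAt F (F' t) t := fun t =>
    ((hder1 t).log (hpos t).ne').sub (hB t)
  have hF'der : ∀ t, HasDerivAt F' (F'' t) t := fun t =>
    ((hder2 t).div (hder1 t) (hpos t).ne').sub (hB' t)
  -- second derivative nonneg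
  have hF''nonneg : ∀ t, 0 ≤ F'' t := by
    intro t
    have key : ψ t * g t ^ 2 ≤ g'' t * g t - g' t * g' t := by
      have h1 : (inner ℂ (S (v t)) (v t) : ℂ).re ^ 2 ≤ ‖S (v t)‖ ^ 2 * ‖v t‖ ^ 2 := by
        have a1 : |(inner ℂ (S (v t)) (v t) : ℂ).re| ≤ ‖(inner ℂ (S (v t)) (v t) : ℂ)‖ :=
          Complex.abs_re_le_norm _
        have a2 : ‖(inner ℂ (S (v t)) (v t) : ℂ)‖ ≤ ‖S (v t)‖ * ‖v t‖ := norm_inner_le_norm _ _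
        have a3 : |(inner ℂ (S (v t)) (v t) : ℂ).re| ≤ ‖S (v t)‖ * ‖v t‖ := a1.trans a2
        calc (inner ℂ (S (v t)) (v t) : ℂ).re ^ 2 = |(inner ℂ (S (v t)) (v t) : ℂ).re| ^ 2 := by
              rw [sq_abs]
          _ ≤ (‖S (v t)‖ * ‖v t‖) ^ 2 := by
              apply pow_le_pow_left₀ (abs_nonneg _) a3
          _ = ‖S (v t)‖ ^ 2 * ‖v t‖ ^ 2 := by ring
      have h2 := hcomm t
      have h3 : (0:ℝ) ≤ ‖v t‖ ^ 2 := by positivity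
      have h4 : ψ t * ‖v t‖ ^ 2 * ‖v t‖ ^ 2 ≤
          2 * (inner ℂ (S (A (v t)) - A (S (v t))) (v t) : ℂ).re * ‖v t‖ ^ 2 :=
        mul_le_mul_of_nonneg_right h2 h3
      simp only [hg, hg', hg'']
      nlinarith [h1, h4]
    have hg2 : (0:ℝ) < g t ^ 2 := pow_pos (hpos t) 2
    have : ψ t ≤ (g'' t * g t - g' t * g' t) / g t ^ 2 := by
      rw [le_div_iff₀ hg2]
      linarith
    simp only [hF'']
    linarith
  -- convexity of F
  have hFdiff : Differentiable ℝ F := fun t => (hFder t).differentiableAt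
  have hderivF : deriv F = F' := funext fun t => (hFder t).deriv
  have hF'diff : Differentiable ℝ F' := fun t => (hF'der t).differentiableAt
  have hconv : ConvexOn ℝ Set.univ F := by
    apply convexOn_univ_of_deriv2_nonneg hFdiff
    · rw [hderivF]; exact hF'diff
    · intro x
      have : deriv^[2] F x = deriv (deriv F) x := by
        simp [Function.iterate_succ, Function.iterate_one]
      rw [this, hderivF, (hF'der x).deriv]
      exact hF''nonneg x
  -- conclude
  intro t ht
  obtain ⟨ht0, ht1⟩ := ht
  have hcx := hconv.2 (Set.mem_univ (0:ℝ)) (Set.mem_univ (1:ℝ))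
    (by linarith : (0:ℝ) ≤ 1 - t) ht0 (by ring)
  simp only [smul_eq_mul, mul_zero, mul_one, zero_add] at hcx
  -- hcx : F t ≤ (1 - t) * F 0 + t * F 1
  have hF0 : F 0 = Real.log (g 0) := by simp [hF, hB0]
  have hF1 : F 1 = Real.log (g 1) := by simp [hF, hB1]
  have hFt : g t * Real.exp (-B t) = Real.exp (F t) := by
    rw [hF]
    simp only [Real.exp_sub, Real.exp_log (hpos t)]
    rw [Real.exp_neg]
    ring
  have hmono := Real.exp_le_exp.mpr hcx
  rw [← hFt] at hmono
  calc g t * Real.exp (-B t) ≤ Real.exp ((1 - t) * F 0 + t * F 1) := hmono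
    _ = g 0 ^ (1 - t) * g 1 ^ t := by
        rw [hF0, hF1, Real.exp_add, Real.rpow_def_of_pos (hpos 0),
          Real.rpow_def_of_pos (hpos 1)]
        ring_nf
    _ = Real.rpow (g 0) (1 - t) * Real.rpow (g 1) t := rfl
end
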